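/- arXiv:2509.08079 — 5 statements merged into one kernel-verified Lean document; each statement's English description precedes it below -/
import Mathlib

section
/- Let β > 0 and let x₀ denote the derivative at α = 0 of the function α ↦ (1+α)·J(1; β/(1+α)). Then the rate function I_N satisfies: (i) I_N(0) = J(1; β); (ii) I_N(x₀) = 0 and I_N(x) > 0 for every x ∈ [0, ln 2) with x ≠ x₀; (iii) I_N is strictly convex on [0, ln 2). -/
/-- `J(r;γ) = ∫₀¹ ln(1 + r e^{−γx}) dx`. -/
noncomputable def Jint (r γ : ℝ) : ℝ :=
  ∫ x in (0:ℝ)..1, Real.log (1 + r * Real.exp (-γ * x))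

/-- The sCGF for soft-decision guesswork in the LRC:
`Λ_N(α) = (1+α)J(1; β/(1+α)) − J(1;β)` for `α > −1` and `Λ_N(α) = −J(1;β)` for `α ≤ −1`. -/
noncomputable def ΛN (β α : ℝ) : ℝ :=
  if -1 < α then (1 + α) * Jint 1 (β / (1 + α)) - Jint 1 β else -Jint 1 β

/-- The rate function `I_N(x) = sup_{α∈ℝ} [xα − Λ_N(α)]`. -/
noncomputable def IN (β x : ℝ) : ℝ := ⨆ α : ℝ, (x * α - ΛN β α)

namespace SoftRateAux

open Real Set intervalIntegral MeasureTheory Filter Topology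

/-! ### The logistic-type function `s ↦ log (1 + exp s)` -/

lemma f_hasDerivAt (s : ℝ) :
    HasDerivAt (fun s : ℝ => Real.log (1 + Real.exp s)) (Real.exp s / (1 + Real.exp s)) s := by
  have h : (1:ℝ) + Real.exp s ≠ 0 := by positivity
  simpa using ((hasDerivAt_const s (1:ℝ)).add (Real.hasDerivAt_exp s)).log h

lemma f2_hasDerivAt (s : ℝ) :
    HasDerivAt (fun s : ℝ => Real.exp s / (1 + Real.exp s))
      (Real.exp s / (1 + Real.exp s) ^ 2) s := by
  have h : (1:ℝ) + Real.exp s ≠ 0 := by positivity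
  have h2 := (Real.hasDerivAt_exp s).div
    ((hasDerivAt_const s (1:ℝ)).add (Real.hasDerivAt_exp s)) h
  exact h2.congr_deriv (by simp only [Pi.add_apply]; ring)

lemma f_convex : ConvexOn ℝ Set.univ (fun s : ℝ => Real.log (1 + Real.exp s)) := by
  have hd : deriv (fun s : ℝ => Real.log (1 + Real.exp s))
      = fun s => Real.exp s / (1 + Real.exp s) := funext fun s => (f_hasDerivAt s).deriv
  refine convexOn_univ_of_deriv2_nonneg (fun s => (f_hasDerivAt s).differentiableAt) ?_ ?_
  · rw [hd]; exact fun s => (f2_hasDerivAt s).differentiableAt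
  · intro s
    have h2 : deriv^[2] (fun s : ℝ => Real.log (1 + Real.exp s)) s
        = Real.exp s / (1 + Real.exp s) ^ 2 := by
      show deriv (deriv (fun s : ℝ => Real.log (1 + Real.exp s))) s = _
      rw [hd]
      exact (f2_hasDerivAt s).deriv
    rw [h2]; positivity

/-! ### Basic facts about `Jint 1` -/

lemma cont_int (γ : ℝ) : Continuous fun x : ℝ => Real.log (1 + Real.exp (-γ * x)) := by
  have h : ∀ x : ℝ, (1:ℝ) + Real.exp (-γ * x) ≠ 0 := fun x => by positivity
  have hc : Continuous fun x : ℝ => (1:ℝ) + Real.exp (-γ * x) := by continuity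
  exact hc.log h

lemma intable (γ : ℝ) :
    IntervalIntegrable (fun x : ℝ => Real.log (1 + Real.exp (-γ * x))) volume 0 1 :=
  (cont_int γ).intervalIntegrable _ _

lemma Jint_one (γ : ℝ) :
    Jint 1 γ = ∫ x in (0:ℝ)..1, Real.log (1 + Real.exp (-γ * x)) := by
  simp [Jint]

lemma Jint_nonneg (γ : ℝ) : 0 ≤ Jint 1 γ := by
  rw [Jint_one]
  apply intervalIntegral.integral_nonneg (by norm_num)
  intro x _
  have := Real.exp_pos (-γ * x)
  exact Real.log_nonneg (by linarith)

lemma Jint_anti {γ₁ γ₂ : ℝ} (h : γ₁ ≤ γ₂) : Jint 1 γ₂ ≤ Jint 1 γ₁ := by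
  rw [Jint_one, Jint_one]
  apply intervalIntegral.integral_mono_on (by norm_num) (intable γ₂) (intable γ₁)
  intro x hx
  have h1 : -γ₂ * x ≤ -γ₁ * x := by nlinarith [hx.1]
  have h2 := Real.exp_le_exp.mpr h1
  have h3 : (0:ℝ) < 1 + Real.exp (-γ₂ * x) := by positivity
  exact Real.log_le_log h3 (by linarith)

lemma Jint_le_inv {γ : ℝ} (hγ : 0 < γ) : Jint 1 γ ≤ 1 / γ := by
  have hD : ∀ x ∈ Set.uIcc (0:ℝ) 1,
      HasDerivAt (fun x : ℝ => -Real.exp (-γ * x) / γ) (Real.exp (-γ * x)) x := by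
    intro x _
    have h1 : HasDerivAt (fun x : ℝ => -γ * x) (-γ) x := by
      simpa using (hasDerivAt_id x).const_mul (-γ)
    have h2 := (h1.exp.div_const γ).neg
    have hf : (fun x : ℝ => -Real.exp (-γ * x) / γ) = -fun x => Real.exp (-γ * x) / γ := by
      funext y; simp only [Pi.neg_apply, neg_div]
    rw [hf]
    exact h2.congr_deriv (by rw [mul_neg, neg_div, neg_neg, mul_div_assoc, div_self hγ.ne', mul_one])
  have hce : Continuous fun x : ℝ => Real.exp (-γ * x) := by continuity
  have hI : (∫ x in (0:ℝ)..1, Real.exp (-γ * x)) = (1 - Real.exp (-γ)) / γ := by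
    rw [intervalIntegral.integral_eq_sub_of_hasDerivAt hD (hce.intervalIntegrable _ _)]
    simp [mul_comm]
    field_simp
    ring
  have h1 : Jint 1 γ ≤ ∫ x in (0:ℝ)..1, Real.exp (-γ * x) := by
    rw [Jint_one]
    apply intervalIntegral.integral_mono_on (by norm_num) (intable γ)
      (hce.intervalIntegrable _ _)
    intro x _
    have hp : (0:ℝ) < 1 + Real.exp (-γ * x) := by positivity
    have := Real.log_le_sub_one_of_pos hp
    linarith
  rw [hI] at h1
  have : (1 - Real.exp (-γ)) / γ ≤ 1 / γ := by
    gcongr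
    · linarith [Real.exp_pos (-γ)]
  linarith

lemma Jint_ge {γ : ℝ} (hγ : 0 ≤ γ) : Real.log 2 - γ / 4 ≤ Jint 1 γ := by
  have hlin : Continuous fun x : ℝ => Real.log 2 - γ / 2 * x := by continuity
  have heq : (∫ x in (0:ℝ)..1, (Real.log 2 - γ / 2 * x)) = Real.log 2 - γ / 4 := by
    rw [intervalIntegral.integral_sub (intervalIntegrable_const)
      ((Continuous.intervalIntegrable (by continuity : Continuous fun x : ℝ => γ / 2 * x) _ _))]
    rw [intervalIntegral.integral_const]
    have : (∫ x in (0:ℝ)..1, γ / 2 * x) = γ / 2 * ∫ x in (0:ℝ)..1, x := by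
      exact intervalIntegral.integral_const_mul _ _
    rw [this, integral_id]
    simp only [smul_eq_mul]
    ring
  rw [Jint_one, ← heq]
  apply intervalIntegral.integral_mono_on (by norm_num) (hlin.intervalIntegrable _ _) (intable γ)
  intro x hx
  have hu : 0 ≤ γ * x := mul_nonneg hγ hx.1
  have he : Real.exp (-(γ * x) / 2) * Real.exp (-(γ * x) / 2) = Real.exp (-γ * x) := by
    rw [← Real.exp_add]; ring_nf
  have hsq := sq_nonneg (1 - Real.exp (-(γ * x) / 2))
  have key : 2 * Real.exp (-(γ * x) / 2) ≤ 1 + Real.exp (-γ * x) := by nlinarith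
  have h2 : Real.log 2 - γ / 2 * x = Real.log (2 * Real.exp (-(γ * x) / 2)) := by
    rw [Real.log_mul two_ne_zero (Real.exp_ne_zero _), Real.log_exp]
    ring
  rw [h2]
  exact Real.log_le_log (by positivity) key

lemma Jint_convex : ConvexOn ℝ Set.univ (fun γ : ℝ => Jint 1 γ) := by
  refine ⟨convex_univ, ?_⟩
  intro c _ d _ a b ha hb hab
  simp only [smul_eq_mul, Jint_one]
  have key : ∀ x ∈ Set.Icc (0:ℝ) 1,
      Real.log (1 + Real.exp (-(a * c + b * d) * x)) ≤
        a * Real.log (1 + Real.exp (-c * x)) + b * Real.log (1 + Real.exp (-d * x)) := by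
    intro x _
    have h := f_convex.2 (Set.mem_univ (-c * x)) (Set.mem_univ (-d * x)) ha hb hab
    simp only [smul_eq_mul] at h
    have harg : a * (-c * x) + b * (-d * x) = -(a * c + b * d) * x := by ring
    rwa [harg] at h
  have hint : IntervalIntegrable
      (fun x => a * Real.log (1 + Real.exp (-c * x)) + b * Real.log (1 + Real.exp (-d * x)))
      volume 0 1 :=
    ((continuous_const.mul (cont_int c)).add (continuous_const.mul (cont_int d))).intervalIntegrable _ _
  calc (∫ x in (0:ℝ)..1, Real.log (1 + Real.exp (-(a * c + b * d) * x)))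
      ≤ ∫ x in (0:ℝ)..1,
          (a * Real.log (1 + Real.exp (-c * x)) + b * Real.log (1 + Real.exp (-d * x))) :=
        intervalIntegral.integral_mono_on (by norm_num) (intable _) hint key
    _ = a * (∫ x in (0:ℝ)..1, Real.log (1 + Real.exp (-c * x)))
        + b * ∫ x in (0:ℝ)..1, Real.log (1 + Real.exp (-d * x)) := by
        rw [intervalIntegral.integral_add ((intable c).const_mul a)
          ((intable d).const_mul b), intervalIntegral.integral_const_mul,
          intervalIntegral.integral_const_mul]

/-- The derivative of `γ ↦ Jint 1 γ`. -/
noncomputable def Jd (γ : ℝ) : ℝ :=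
  ∫ x in (0:ℝ)..1, Real.exp (-γ * x) * (-x) / (1 + Real.exp (-γ * x))

lemma Jint_hasDerivAt (γ₀ : ℝ) : HasDerivAt (fun γ => Jint 1 γ) (Jd γ₀) γ₀ := by
  have cont' : ∀ γ : ℝ, Continuous fun x : ℝ => Real.exp (-γ * x) * (-x) / (1 + Real.exp (-γ * x)) := by
    intro γ
    apply Continuous.div
    · continuity
    · continuity
    · intro x; positivity
  have key := intervalIntegral.hasDerivAt_integral_of_dominated_loc_of_deriv_le
    (F := fun (γ : ℝ) (x : ℝ) => Real.log (1 + Real.exp (-γ * x)))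
    (F' := fun (γ : ℝ) (x : ℝ) => Real.exp (-γ * x) * (-x) / (1 + Real.exp (-γ * x)))
    (x₀ := γ₀) (a := 0) (b := 1) (bound := fun _ => 1) (μ := volume) (s := Metric.ball γ₀ 1)
    (Metric.ball_mem_nhds γ₀ one_pos)
    (Filter.Eventually.of_forall fun γ => (cont_int γ).aestronglyMeasurable)
    (intable γ₀)
    (cont' γ₀).aestronglyMeasurable
    ?_ (intervalIntegrable_const) ?_
  · simp only [Jint_one]; exact key.2
  · apply Filter.Eventually.of_forall
    intro t ht γ _
    rw [Set.uIoc_of_le (by norm_num : (0:ℝ) ≤ 1)] at ht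
    have ht0 : 0 < t := ht.1
    have ht1 : t ≤ 1 := ht.2
    have hp : (0:ℝ) < 1 + Real.exp (-γ * t) := by positivity
    rw [Real.norm_eq_abs, abs_div, abs_of_pos hp, abs_mul, abs_of_pos (Real.exp_pos _),
      abs_neg, abs_of_pos ht0]
    rw [div_le_one hp]
    nlinarith [Real.exp_pos (-γ * t)]
  · apply Filter.Eventually.of_forall
    intro t _ γ _
    have h1 : HasDerivAt (fun γ : ℝ => -γ * t) (-t) γ := by
      have := (hasDerivAt_mul_const (x := γ) t).neg; simp only [neg_mul]; exact this
    have h2 := h1.exp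
    have h3 := (hasDerivAt_const γ (1:ℝ)).add h2
    have hne : (1:ℝ) + Real.exp (-γ * t) ≠ 0 := by positivity
    have h4 := h3.log hne
    exact h4.congr_deriv (by simp only [Pi.add_apply]; ring)

/-! ### The function `F α = (1+α) Jint 1 (β/(1+α))` -/

/-- The main branch of the sCGF. -/
noncomputable def Fb (β : ℝ) : ℝ → ℝ := fun α : ℝ => (1 + α) * Jint 1 (β / (1 + α))

lemma Fb_diff {β α : ℝ} (hα : -1 < α) : DifferentiableAt ℝ (Fb β) α := by
  have h1 : (1:ℝ) + α ≠ 0 := by linarith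
  have d1 : DifferentiableAt ℝ (fun α : ℝ => 1 + α) α := by fun_prop
  have d2 : DifferentiableAt ℝ (fun α : ℝ => β / (1 + α)) α := (differentiableAt_const β).div d1 h1
  have d3 : DifferentiableAt ℝ (fun γ => Jint 1 γ) (β / (1 + α)) :=
    (Jint_hasDerivAt _).differentiableAt
  exact d1.mul (d3.comp (g := fun γ => Jint 1 γ) α d2)

lemma Fb_neg_one {β : ℝ} : Fb β (-1) = 0 := by norm_num [Fb]

lemma Fb_zero {β : ℝ} : Fb β 0 = Jint 1 β := by norm_num [Fb]

lemma Fb_nonneg {β : ℝ} {α : ℝ} (hα : -1 ≤ α) : 0 ≤ Fb β α :=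
  mul_nonneg (by linarith) (Jint_nonneg _)

lemma Fb_le_sq {β : ℝ} (hβ : 0 < β) {α : ℝ} (hα : -1 < α) : Fb β α ≤ (1 + α) ^ 2 / β := by
  have ht : (0:ℝ) < 1 + α := by linarith
  have hγ : 0 < β / (1 + α) := div_pos hβ ht
  have h1 : Jint 1 (β / (1 + α)) ≤ (1 + α) / β := by
    have := Jint_le_inv hγ
    rwa [one_div_div] at this
  calc Fb β α ≤ (1 + α) * ((1 + α) / β) := mul_le_mul_of_nonneg_left h1 ht.le
    _ = (1 + α) ^ 2 / β := by ring

lemma Fb_ge {β : ℝ} (hβ : 0 < β) {α : ℝ} (hα : -1 < α) :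
    (1 + α) * Real.log 2 - β / 4 ≤ Fb β α := by
  have ht : (0:ℝ) < 1 + α := by linarith
  have hγ : 0 < β / (1 + α) := div_pos hβ ht
  have h1 := Jint_ge hγ.le
  have h2 : (1 + α) * (Real.log 2 - β / (1 + α) / 4) ≤ Fb β α :=
    mul_le_mul_of_nonneg_left h1 ht.le
  have h3 : (1 + α) * (Real.log 2 - β / (1 + α) / 4) = (1 + α) * Real.log 2 - β / 4 := by
    field_simp
  linarith [h3 ▸ h2]

lemma Fb_convex {β : ℝ} (hβ : 0 < β) : ConvexOn ℝ (Set.Ici (-1:ℝ)) (Fb β) := by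
  refine ⟨convex_Ici _, ?_⟩
  intro p hp q hq a b ha hb hab
  simp only [smul_eq_mul, Fb]
  have hp' : (0:ℝ) ≤ 1 + p := by have := Set.mem_Ici.mp hp; linarith
  have hq' : (0:ℝ) ≤ 1 + q := by have := Set.mem_Ici.mp hq; linarith
  have hT : 1 + (a * p + b * q) = a * (1 + p) + b * (1 + q) := by linear_combination -hab
  rcases eq_or_lt_of_le hp' with hp0 | hp0
  · rcases eq_or_lt_of_le hq' with hq0 | hq0
    · have hTz : 1 + (a * p + b * q) = 0 := by rw [hT, ← hp0, ← hq0]; ring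
      rw [hTz, ← hp0, ← hq0]
      simp
    · -- 1 + p = 0 < 1 + q
      have hTv : 1 + (a * p + b * q) = b * (1 + q) := by rw [hT, ← hp0]; ring
      rw [hTv, ← hp0]
      simp only [zero_mul, mul_zero, zero_add]
      rcases eq_or_lt_of_le hb with hb0 | hb0
      · rw [← hb0]; simp
      · have hbq : 0 < b * (1 + q) := mul_pos hb0 hq0
        have hdiv : β / (1 + q) ≤ β / (b * (1 + q)) := by
          apply div_le_div_of_nonneg_left hβ.le hbq ?_ |>.trans_eq rfl
          nlinarith [hab, ha]
        have hg := Jint_anti hdiv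
        have := mul_le_mul_of_nonneg_left hg hbq.le
        nlinarith [this]
  · rcases eq_or_lt_of_le hq' with hq0 | hq0
    · -- 1 + q = 0 < 1 + p
      have hTv : 1 + (a * p + b * q) = a * (1 + p) := by rw [hT, ← hq0]; ring
      rw [hTv, ← hq0]
      simp only [zero_mul, mul_zero, add_zero]
      rcases eq_or_lt_of_le ha with ha0 | ha0
      · rw [← ha0]; simp
      · have hap : 0 < a * (1 + p) := mul_pos ha0 hp0
        have hdiv : β / (1 + p) ≤ β / (a * (1 + p)) := by
          apply div_le_div_of_nonneg_left hβ.le hap ?_ |>.trans_eq rfl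
          nlinarith [hab, hb]
        have hg := Jint_anti hdiv
        have := mul_le_mul_of_nonneg_left hg hap.le
        nlinarith [this]
    · -- both positive
      have hT0 : (0:ℝ) < 1 + (a * p + b * q) := by
        rcases eq_or_lt_of_le ha with ha0 | ha0
        · have hb1 : b = 1 := by linarith
          rw [hT, ← ha0, hb1]; simpa using hq0
        · have h1 := mul_pos ha0 hp0
          have h2 := mul_nonneg hb hq'
          rw [hT]; linarith
      set T := 1 + (a * p + b * q) with hTdef
      have hw1 : 0 ≤ a * (1 + p) / T := by positivity
      have hw2 : 0 ≤ b * (1 + q) / T := by positivity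
      have hwsum : a * (1 + p) / T + b * (1 + q) / T = 1 := by
        rw [← add_div, ← hT, div_self hT0.ne']
      have hkey := Jint_convex.2 (Set.mem_univ (β / (1 + p))) (Set.mem_univ (β / (1 + q)))
        hw1 hw2 hwsum
      simp only [smul_eq_mul] at hkey
      have e1 : a * (1 + p) / T * (β / (1 + p)) = a * β / T := by
        field_simp
      have e2 : b * (1 + q) / T * (β / (1 + q)) = b * β / T := by
        field_simp
      have harg : a * (1 + p) / T * (β / (1 + p)) + b * (1 + q) / T * (β / (1 + q)) = β / T := by
        rw [e1, e2, ← add_div]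
        congr 1
        linear_combination β * hab
      rw [harg] at hkey
      have hmul := mul_le_mul_of_nonneg_left hkey hT0.le
      have hfin : T * (a * (1 + p) / T * Jint 1 (β / (1 + p))
            + b * (1 + q) / T * Jint 1 (β / (1 + q)))
          = a * ((1 + p) * Jint 1 (β / (1 + p))) + b * ((1 + q) * Jint 1 (β / (1 + q))) := by
        field_simp
      calc T * Jint 1 (β / T) ≤ _ := hmul
        _ = _ := hfin


/-! ### Properties of `ΛN` -/

lemma Λ_eq_F {β α : ℝ} (hα : -1 < α) : ΛN β α = Fb β α - Jint 1 β := if_pos hα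

lemma Λ_eq_const {β α : ℝ} (hα : α ≤ -1) : ΛN β α = -Jint 1 β := if_neg (not_lt.mpr hα)

lemma Λ_zero {β : ℝ} : ΛN β 0 = 0 := by
  rw [Λ_eq_F (by norm_num), Fb_zero, sub_self]

lemma Λ_ge {β : ℝ} (α : ℝ) : -Jint 1 β ≤ ΛN β α := by
  by_cases h : -1 < α
  · rw [Λ_eq_F h]
    have := Fb_nonneg (β := β) h.le
    linarith
  · rw [Λ_eq_const (not_lt.mp h)]

lemma Λ_dist {β : ℝ} (hβ : 0 < β) (α : ℝ) : |ΛN β α - ΛN β (-1)| ≤ (1 + α) ^ 2 / β := by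
  rw [Λ_eq_const le_rfl]
  by_cases h : -1 < α
  · rw [Λ_eq_F h]
    have h1 := Fb_nonneg (β := β) h.le
    have h2 := Fb_le_sq hβ h
    have e : Fb β α - Jint 1 β - -Jint 1 β = Fb β α := by ring
    rw [e, abs_of_nonneg h1]
    exact h2
  · rw [Λ_eq_const (not_lt.mp h), sub_self, abs_zero]
    positivity

lemma Λ_hasDerivAt_neg_one {β : ℝ} (hβ : 0 < β) : HasDerivAt (ΛN β) 0 (-1) := by
  rw [hasDerivAt_iff_isLittleO, Asymptotics.isLittleO_iff]
  intro c hc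
  filter_upwards [Metric.ball_mem_nhds (-1:ℝ) (mul_pos hc hβ)] with y hy
  rw [Metric.mem_ball, Real.dist_eq] at hy
  have h1 := Λ_dist hβ y
  have h2 : y - -1 = 1 + y := by ring
  simp only [smul_zero, sub_zero, Real.norm_eq_abs]
  rw [h2] at hy ⊢
  have h4 : (1 + y) ^ 2 / β ≤ c * |1 + y| := by
    rw [div_le_iff₀ hβ]
    nlinarith [abs_nonneg (1 + y), sq_abs (1 + y), hy]
  linarith

lemma Λ_diffAt {β : ℝ} (hβ : 0 < β) (α : ℝ) : DifferentiableAt ℝ (ΛN β) α := by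
  rcases lt_trichotomy α (-1) with h | h | h
  · have hev : ΛN β =ᶠ[𝓝 α] fun _ => -Jint 1 β := by
      filter_upwards [Iio_mem_nhds h] with y hy
      exact Λ_eq_const (le_of_lt hy)
    exact (differentiableAt_const (-Jint 1 β)).congr_of_eventuallyEq hev
  · rw [h]; exact (Λ_hasDerivAt_neg_one hβ).differentiableAt
  · have hev : ΛN β =ᶠ[𝓝 α] fun y => Fb β y - Jint 1 β := by
      filter_upwards [Ioi_mem_nhds h] with y hy
      exact Λ_eq_F hy
    exact ((Fb_diff h).sub_const _).congr_of_eventuallyEq hev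

lemma Λ_cont {β : ℝ} (hβ : 0 < β) : Continuous (ΛN β) :=
  continuous_iff_continuousAt.mpr fun α => (Λ_diffAt hβ α).continuousAt

lemma Λ_hasDerivAt_zero {β : ℝ} : HasDerivAt (ΛN β) (deriv (Fb β) 0) 0 := by
  have hF : HasDerivAt (Fb β) (deriv (Fb β) 0) 0 := (Fb_diff (by norm_num)).hasDerivAt
  have hev : ΛN β =ᶠ[𝓝 0] fun y => Fb β y - Jint 1 β := by
    filter_upwards [Ioi_mem_nhds (by norm_num : (-1:ℝ) < 0)] with y hy
    exact Λ_eq_F hy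
  exact (hF.sub_const _).congr_of_eventuallyEq hev

lemma Λ_tangent {β : ℝ} (hβ : 0 < β) (α : ℝ) : deriv (Fb β) 0 * α ≤ ΛN β α := by
  set x₀ := deriv (Fb β) 0 with hx
  have hF0 : HasDerivAt (Fb β) x₀ 0 := (Fb_diff (by norm_num)).hasDerivAt
  have hconv := Fb_convex (β := β) hβ
  have hmem0 : (0:ℝ) ∈ Set.Ici (-1:ℝ) := by norm_num
  by_cases h : -1 < α
  · rw [Λ_eq_F h]
    rcases lt_trichotomy α 0 with hα | hα | hα
    · have hs := hconv.slope_le_of_hasDerivAt (Set.mem_Ici.mpr h.le) hmem0 hα hF0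
      rw [slope_def_field] at hs
      have h0α : (0:ℝ) < 0 - α := by linarith
      rw [div_le_iff₀ h0α] at hs
      rw [Fb_zero] at hs
      nlinarith [hs]
    · rw [hα, Fb_zero]; simp
    · have hs := hconv.le_slope_of_hasDerivAt hmem0 (Set.mem_Ici.mpr h.le) hα hF0
      rw [slope_def_field] at hs
      have h0α : (0:ℝ) < α - 0 := by linarith
      rw [le_div_iff₀ h0α] at hs
      rw [Fb_zero] at hs
      nlinarith [hs]
  · push_neg at h
    rw [Λ_eq_const h]
    have hsl := hconv.slope_le_of_hasDerivAt (Set.mem_Ici.mpr (le_refl (-1:ℝ))) hmem0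
      (by norm_num) hF0
    rw [slope_def_field, Fb_neg_one, Fb_zero] at hsl
    have hJ : Jint 1 β ≤ x₀ := by
      have : (Jint 1 β - 0) / (0 - -1) = Jint 1 β := by norm_num
      rwa [this] at hsl
    have hJ0 := Jint_nonneg β
    nlinarith [hJ, hJ0, h]

lemma term_le {β : ℝ} (hβ : 0 < β) {x α : ℝ} (hx0 : 0 ≤ x) (hx2 : x ≤ Real.log 2) :
    x * α - ΛN β α ≤ Jint 1 β + β / 4 := by
  rcases le_or_gt α 0 with h | h
  · have h1 := Λ_ge (β := β) α
    have h2 : 0 ≤ x * (-α) := mul_nonneg hx0 (by linarith)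
    nlinarith
  · have hα : (-1:ℝ) < α := by linarith
    rw [Λ_eq_F hα]
    have hF := Fb_ge hβ hα
    have hl2 : 0 ≤ Real.log 2 := Real.log_nonneg one_le_two
    have hxa : x * α ≤ Real.log 2 * α := mul_le_mul_of_nonneg_right hx2 h.le
    nlinarith [hF, hxa, hl2]

lemma bdd {β : ℝ} (hβ : 0 < β) {x : ℝ} (hx0 : 0 ≤ x) (hx2 : x ≤ Real.log 2) :
    BddAbove (Set.range fun α => x * α - ΛN β α) := by
  refine ⟨Jint 1 β + β / 4, ?_⟩
  rintro _ ⟨α, rfl⟩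
  exact term_le hβ hx0 hx2

lemma attain {β : ℝ} (hβ : 0 < β) {z : ℝ} (hz0 : 0 < z) (hz2 : z < Real.log 2) :
    ∃ a, ∀ α, z * α - ΛN β α ≤ z * a - ΛN β a := by
  have hcont : Continuous fun α => z * α - ΛN β α :=
    (continuous_const.mul continuous_id).sub (Λ_cont hβ)
  set J := Jint 1 β with hJ
  set R : ℝ := max 1 (max ((J + 1) / z) ((J + β / 4 + 1) / (Real.log 2 - z))) with hR
  have hR1 : (1:ℝ) ≤ R := le_max_left _ _
  have h0mem : (0:ℝ) ∈ Set.Icc (-R) R := by constructor <;> linarith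
  obtain ⟨a, haI, hamax⟩ := (isCompact_Icc (a := -R) (b := R)).exists_isMaxOn
    ⟨0, h0mem⟩ hcont.continuousOn
  refine ⟨a, fun α => ?_⟩
  by_cases hmem : α ∈ Set.Icc (-R) R
  · exact hamax hmem
  · have hbase : (0:ℝ) ≤ z * a - ΛN β a := by
      have h0 := hamax h0mem
      simpa [Λ_zero] using h0
    have hneg : z * α - ΛN β α < 0 := by
      rw [Set.mem_Icc] at hmem; push_neg at hmem
      rcases lt_or_ge α (-R) with hout | hge
      · have hα1 : α ≤ -1 := by linarith
        rw [Λ_eq_const hα1, ← hJ]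
        have hRz : (J + 1) / z ≤ R := le_trans (le_max_left _ _) (le_max_right _ _)
        have h1 : J + 1 ≤ R * z := (div_le_iff₀ hz0).mp hRz
        have hzα : z * α < z * (-R) := mul_lt_mul_of_pos_left hout hz0
        nlinarith
      · have hout := hmem hge
        have hα1 : (-1:ℝ) < α := by linarith
        rw [Λ_eq_F hα1, ← hJ]
        have hF := Fb_ge hβ hα1
        have hRz : (J + β / 4 + 1) / (Real.log 2 - z) ≤ R :=
          le_trans (le_max_right _ _) (le_max_right _ _)
        have h1 : J + β / 4 + 1 ≤ R * (Real.log 2 - z) := (div_le_iff₀ (by linarith)).mp hRz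
        have h2 : R * (Real.log 2 - z) < α * (Real.log 2 - z) :=
          mul_lt_mul_of_pos_right hout (by linarith)
        nlinarith [hF, Real.log_nonneg one_le_two]
    linarith

end SoftRateAux

theorem soft_rate_function_properties (β : ℝ) (hβ : 0 < β)
    (x₀ : ℝ) (hx₀ : x₀ = deriv (fun α : ℝ => (1 + α) * Jint 1 (β / (1 + α))) 0) :
    IN β 0 = Jint 1 β ∧
    (IN β x₀ = 0 ∧ ∀ x ∈ Set.Ico (0:ℝ) (Real.log 2), x ≠ x₀ → 0 < IN β x) ∧
    StrictConvexOn ℝ (Set.Ico (0:ℝ) (Real.log 2)) (IN β) := by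
  classical
  have hx₀F : x₀ = deriv (SoftRateAux.Fb β) 0 := hx₀
  refine ⟨?_, ⟨?_, ?_⟩, ?_⟩
  · -- (i) IN β 0 = Jint 1 β
    simp only [IN]
    apply le_antisymm
    · apply ciSup_le
      intro α
      have := SoftRateAux.Λ_ge (β := β) α
      simp only [zero_mul, zero_sub]
      linarith
    · have hval : (0:ℝ) * (-1) - ΛN β (-1) = Jint 1 β := by
        rw [SoftRateAux.Λ_eq_const le_rfl]; ring
      have hbdd : BddAbove (Set.range fun α => (0:ℝ) * α - ΛN β α) := by
        refine ⟨Jint 1 β, ?_⟩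
        rintro _ ⟨α, rfl⟩
        have := SoftRateAux.Λ_ge (β := β) α
        simp only [zero_mul, zero_sub]
        linarith
      calc Jint 1 β = (0:ℝ) * (-1) - ΛN β (-1) := hval.symm
        _ ≤ ⨆ α : ℝ, ((0:ℝ) * α - ΛN β α) := le_ciSup hbdd (-1)
  · -- (ii a) IN β x₀ = 0
    simp only [IN]
    have htan : ∀ α, x₀ * α ≤ ΛN β α := by
      intro α
      have := SoftRateAux.Λ_tangent hβ α
      rwa [← hx₀F] at this
    apply le_antisymm
    · apply ciSup_le
      intro α
      exact sub_nonpos.mpr (htan α)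
    · have hbdd : BddAbove (Set.range fun α => x₀ * α - ΛN β α) := by
        refine ⟨0, ?_⟩
        rintro _ ⟨α, rfl⟩
        exact sub_nonpos.mpr (htan α)
      have h0 : x₀ * 0 - ΛN β 0 = 0 := by rw [SoftRateAux.Λ_zero]; ring
      calc (0:ℝ) = x₀ * 0 - ΛN β 0 := h0.symm
        _ ≤ _ := le_ciSup hbdd 0
  · -- (ii b) positivity away from x₀
    rintro x ⟨hx0, hx2⟩ hne
    have hbdd := SoftRateAux.bdd hβ hx0 hx2.le
    have hΛd : HasDerivAt (ΛN β) x₀ 0 := by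
      rw [hx₀F]; exact SoftRateAux.Λ_hasDerivAt_zero
    have hlo := hasDerivAt_iff_isLittleO.mp hΛd
    rw [Asymptotics.isLittleO_iff] at hlo
    have hsup : ∀ y : ℝ, x * y - ΛN β y ≤ IN β x := fun y => by
      simp only [IN]; exact le_ciSup hbdd y
    rcases lt_or_gt_of_ne hne with hlt | hgt
    · -- x < x₀
      have hc : 0 < (x₀ - x) / 2 := by linarith
      have hev := hlo hc
      rw [Metric.eventually_nhds_iff] at hev
      obtain ⟨δ, hδ0, hδ⟩ := hev
      set y : ℝ := -(δ / 2) with hy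
      have hyd : dist y 0 < δ := by
        rw [Real.dist_eq, sub_zero, hy, abs_neg, abs_of_pos (by linarith)]
        linarith
      have hb := hδ hyd
      simp only [SoftRateAux.Λ_zero, sub_zero, smul_eq_mul, Real.norm_eq_abs] at hb
      have hyabs : |y| = δ / 2 := by rw [hy, abs_neg, abs_of_pos (by linarith)]
      rw [hyabs] at hb
      have hb' := (abs_le.mp hb).2
      have hgoal : 0 < x * y - ΛN β y := by
        rw [hy] at hb' ⊢
        nlinarith [mul_pos (show (0:ℝ) < x₀ - x by linarith) hδ0]
      exact lt_of_lt_of_le hgoal (hsup y)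
    · -- x₀ < x
      have hc : 0 < (x - x₀) / 2 := by linarith
      have hev := hlo hc
      rw [Metric.eventually_nhds_iff] at hev
      obtain ⟨δ, hδ0, hδ⟩ := hev
      set y : ℝ := δ / 2 with hy
      have hyd : dist y 0 < δ := by
        rw [Real.dist_eq, sub_zero, hy, abs_of_pos (by linarith)]
        linarith
      have hb := hδ hyd
      simp only [SoftRateAux.Λ_zero, sub_zero, smul_eq_mul, Real.norm_eq_abs] at hb
      have hyabs : |y| = δ / 2 := by rw [hy, abs_of_pos (by linarith)]
      rw [hyabs] at hb
      have hb' := (abs_le.mp hb).2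
      have hgoal : 0 < x * y - ΛN β y := by
        rw [hy] at hb' ⊢
        nlinarith [mul_pos (show (0:ℝ) < x - x₀ by linarith) hδ0]
      exact lt_of_lt_of_le hgoal (hsup y)
  · -- (iii) strict convexity
    constructor
    · exact convex_Ico 0 (Real.log 2)
    · rintro x ⟨hx0, hx2⟩ y ⟨hy0, hy2⟩ hxy a b ha hb hab
      simp only [smul_eq_mul]
      set z := a * x + b * y with hz
      have hz0 : 0 < z := by
        rcases lt_or_eq_of_le hx0 with h0 | h0
        · nlinarith [mul_pos ha h0, mul_nonneg hb.le hy0]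
        · have hy0' : 0 < y := by
            rcases lt_or_eq_of_le hy0 with h1 | h1
            · exact h1
            · exact absurd (by rw [← h0, ← h1] : x = y) hxy
          nlinarith [mul_pos hb hy0', mul_nonneg ha.le hx0]
      have hlog : a * Real.log 2 + b * Real.log 2 = Real.log 2 := by
        linear_combination Real.log 2 * hab
      have hz2 : z < Real.log 2 := by
        nlinarith [mul_lt_mul_of_pos_left hx2 ha, mul_lt_mul_of_pos_left hy2 hb]
      obtain ⟨α, hα⟩ := SoftRateAux.attain hβ hz0 hz2
      have hbz := SoftRateAux.bdd hβ hz0.le hz2.le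
      have hbx := SoftRateAux.bdd hβ hx0 hx2.le
      have hby := SoftRateAux.bdd hβ hy0 hy2.le
      have hINz : IN β z = z * α - ΛN β α := by
        simp only [IN]
        exact le_antisymm (ciSup_le hα) (le_ciSup hbz α)
      have hxle : x * α - ΛN β α ≤ IN β x := by simp only [IN]; exact le_ciSup hbx α
      have hyle : y * α - ΛN β α ≤ IN β y := by simp only [IN]; exact le_ciSup hby α
      by_contra hcon
      push_neg at hcon
      have hsplit : z * α - ΛN β α = a * (x * α - ΛN β α) + b * (y * α - ΛN β α) := by
        rw [hz]; linear_combination ΛN β α * hab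
      have h1 := mul_le_mul_of_nonneg_left hxle ha.le
      have h2 := mul_le_mul_of_nonneg_left hyle hb.le
      have e1 : a * IN β x ≤ a * (x * α - ΛN β α) := by linarith [hcon, hINz.symm ▸ hcon]
      have e2 : b * IN β y ≤ b * (y * α - ΛN β α) := by linarith [hcon]
      have hINx : IN β x = x * α - ΛN β α :=
        le_antisymm ((mul_le_mul_iff_right₀ ha).mp e1) hxle
      have hINy : IN β y = y * α - ΛN β α :=
        le_antisymm ((mul_le_mul_iff_right₀ hb).mp e2) hyle
      have hkey : ∀ w : ℝ, (∀ γ : ℝ, w * γ - ΛN β γ ≤ w * α - ΛN β α) →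
          w = deriv (ΛN β) α := by
        intro w hw
        have hmin : IsLocalMin (fun γ => ΛN β γ - w * γ) α :=
          Filter.Eventually.of_forall fun γ => by
            have := hw γ; simp only; linarith
        have hΛd : HasDerivAt (ΛN β) (deriv (ΛN β) α) α :=
          (SoftRateAux.Λ_diffAt hβ α).hasDerivAt
        have hw' : HasDerivAt (fun γ : ℝ => w * γ) w α := by
          simpa using (hasDerivAt_id α).const_mul w
        have hd := hΛd.sub hw'
        have hz := hmin.hasDerivAt_eq_zero hd
        linarith
      have hxsup : ∀ γ : ℝ, x * γ - ΛN β γ ≤ x * α - ΛN β α := fun γ => by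
        have h := le_ciSup hbx γ
        calc x * γ - ΛN β γ ≤ IN β x := h
          _ = x * α - ΛN β α := hINx
      have hysup : ∀ γ : ℝ, y * γ - ΛN β γ ≤ y * α - ΛN β α := fun γ => by
        have h := le_ciSup hby γ
        calc y * γ - ΛN β γ ≤ IN β y := h
          _ = y * α - ΛN β α := hINy
      exact hxy ((hkey x hxsup).trans (hkey y hysup).symm)
end

section
/- Let β > 0. There is a unique t(β) ∈ (0,1/2) satisfying e^{β(1−t(β))} = 1 + (e^β − 1)·t(β), and t(β) is the unique maximizer over t ∈ (0,1) of the function t ↦ h(t) + J(r_{t,β}; β) − t ln r_{t,β}. -/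
/-- `r_{t,β} = (e^{βt} − 1)/(1 − e^{β(t−1)})`. -/
noncomputable def rtβ (t β : ℝ) : ℝ :=
  (Real.exp (β * t) - 1) / (1 - Real.exp (β * (t - 1)))

/-- The binary entropy function (in nats). -/
noncomputable def binEnt (t : ℝ) : ℝ := -t * Real.log t - (1 - t) * Real.log (1 - t)

open Real MeasureTheory Set Metric intervalIntegral

lemma aux_pos' {r x : ℝ} (hr : 0 < r) (β : ℝ) : 0 < 1 + r * Real.exp (-β * x) := by
  positivity

lemma integral_eval' {β r : ℝ} (hβ : 0 < β) (hr : 0 < r) :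
    ∫ x in (0:ℝ)..1, Real.exp (-β * x) / (1 + r * Real.exp (-β * x))
      = (Real.log (1 + r) - Real.log (1 + r * Real.exp (-β))) / (β * r) := by
  have key : ∀ x ∈ uIcc (0:ℝ) 1,
      HasDerivAt (fun x => Real.log (1 + r * Real.exp (-β * x)) / (-(β * r)))
        (Real.exp (-β * x) / (1 + r * Real.exp (-β * x))) x := by
    intro x _
    have h1 : HasDerivAt (fun y : ℝ => -β * y) (-β) x := by
      simpa using (hasDerivAt_id x).const_mul (-β)
    have h2 := (((h1.exp.const_mul r).const_add 1).log (ne_of_gt (aux_pos' hr β)))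
    have h3 := h2.div_const (-(β * r))
    refine h3.congr_deriv ?_
    have h4 := aux_pos' (r := r) (x := x) hr β
    have hβr : β * r ≠ 0 := by positivity
    field_simp
  have hcont : Continuous fun x : ℝ => Real.exp (-β * x) / (1 + r * Real.exp (-β * x)) := by
    apply Continuous.div ((continuous_const.mul continuous_id).rexp)
      (continuous_const.add (continuous_const.mul ((continuous_const.mul continuous_id).rexp)))
    intro x; exact ne_of_gt (aux_pos' hr β)
  rw [integral_eq_sub_of_hasDerivAt key (hcont.intervalIntegrable 0 1)]
  have hβr : β * r ≠ 0 := by positivity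
  rw [mul_one, mul_zero, Real.exp_zero, mul_one]
  field_simp
  ring

lemma hasDerivAt_Jint {β r : ℝ} (hβ : 0 < β) (hr : 0 < r) :
    HasDerivAt (fun r => Jint r β)
      ((Real.log (1 + r) - Real.log (1 + r * Real.exp (-β))) / (β * r)) r := by
  rw [← integral_eval' hβ hr]
  have hε : (0:ℝ) < r / 2 := by linarith
  have main := intervalIntegral.hasDerivAt_integral_of_dominated_loc_of_deriv_le
    (F := fun x t => Real.log (1 + x * Real.exp (-β * t)))
    (F' := fun x t => Real.exp (-β * t) / (1 + x * Real.exp (-β * t)))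
    (x₀ := r) (a := 0) (b := 1) (bound := fun _ => 1) (μ := volume) (𝕜 := ℝ) (ball_mem_nhds r hε)
    ?_ ?_ ?_ ?_ ?_ ?_
  · exact main.2
  · refine Filter.Eventually.of_forall fun x => ?_
    exact Real.measurable_log.comp (by fun_prop) |>.aestronglyMeasurable
  · refine Continuous.intervalIntegrable ?_ 0 1
    refine Continuous.log ?_ fun t => ne_of_gt (aux_pos' hr β)
    exact continuous_const.add (continuous_const.mul ((continuous_const.mul continuous_id).rexp))
  · apply Continuous.aestronglyMeasurable
    refine Continuous.div ((continuous_const.mul continuous_id).rexp)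
      (continuous_const.add (continuous_const.mul ((continuous_const.mul continuous_id).rexp)))
      fun t => ne_of_gt (aux_pos' hr β)
  · refine Filter.Eventually.of_forall fun t ht x hx => ?_
    have hx' : 0 < x := by
      have := abs_lt.1 (mem_ball_iff_norm.1 hx); linarith [this.1]
    have ht' : 0 < t := by have := ht.1; simpa using this
    have he1 : Real.exp (-β * t) ≤ 1 := Real.exp_le_one_iff.2 (by nlinarith)
    have he0 : 0 < Real.exp (-β * t) := Real.exp_pos _
    have hd : (0:ℝ) < 1 + x * Real.exp (-β * t) := aux_pos' hx' β
    rw [Real.norm_eq_abs, abs_of_pos (div_pos he0 hd), div_le_one hd]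
    nlinarith
  · exact intervalIntegrable_const
  · refine Filter.Eventually.of_forall fun t ht x hx => ?_
    have hx' : 0 < x := by
      have := abs_lt.1 (mem_ball_iff_norm.1 hx); linarith [this.1]
    have h := (((hasDerivAt_id x).mul_const (Real.exp (-β * t))).const_add 1).log
      (ne_of_gt (aux_pos' hx' β))
    simpa using h

lemma num_pos {β t : ℝ} (hβ : 0 < β) (ht : t ∈ Set.Ioo (0:ℝ) 1) :
    0 < Real.exp (β * t) - 1 := by
  have h : (0:ℝ) < β * t := mul_pos hβ ht.1
  have := Real.add_one_lt_exp (ne_of_gt h)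
  linarith

lemma den_pos {β t : ℝ} (hβ : 0 < β) (ht : t ∈ Set.Ioo (0:ℝ) 1) :
    0 < 1 - Real.exp (β * (t - 1)) := by
  have h : β * (t - 1) < 0 := mul_neg_of_pos_of_neg hβ (by linarith [ht.2])
  have := Real.exp_lt_one_iff.mpr h
  linarith

lemma rt_pos {β t : ℝ} (hβ : 0 < β) (ht : t ∈ Set.Ioo (0:ℝ) 1) : 0 < rtβ t β :=
  div_pos (num_pos hβ ht) (den_pos hβ ht)

lemma rt_strictMono {β : ℝ} (hβ : 0 < β) :
    StrictMonoOn (fun t => rtβ t β) (Set.Ioo (0:ℝ) 1) := by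
  intro s hs u hu hsu
  simp only [rtβ]
  rw [div_lt_div_iff₀ (den_pos hβ hs) (den_pos hβ hu)]
  have h1 : Real.exp (β * s) < Real.exp (β * u) := by
    apply Real.exp_lt_exp.mpr; nlinarith
  have h2 : Real.exp (β * (s - 1)) < Real.exp (β * (u - 1)) := by
    apply Real.exp_lt_exp.mpr; nlinarith
  have h3 := num_pos hβ hs
  have h4 := den_pos hβ hu
  have h5 := den_pos hβ hs
  have h6 := num_pos hβ hu
  nlinarith

lemma ratio_identity {β t : ℝ} (hβ : 0 < β) (ht : t ∈ Set.Ioo (0:ℝ) 1) :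
    Real.log (1 + rtβ t β) - Real.log (1 + rtβ t β * Real.exp (-β)) = β * t := by
  have hden := den_pos hβ ht
  have hr := rt_pos hβ ht
  have h2 : (0:ℝ) < 1 + rtβ t β * Real.exp (-β) := by positivity
  have key : 1 + rtβ t β = Real.exp (β * t) * (1 + rtβ t β * Real.exp (-β)) := by
    have hb : Real.exp (β * (t - 1)) = Real.exp (β * t) * Real.exp (-β) := by
      rw [← Real.exp_add]; ring_nf
    rw [rtβ]
    field_simp
    rw [hb]
    ring
  rw [key, Real.log_mul (by positivity) (ne_of_gt h2), Real.log_exp]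
  ring

lemma hasDerivAt_binEnt {t : ℝ} (ht : t ∈ Set.Ioo (0:ℝ) 1) :
    HasDerivAt binEnt (Real.log (1 - t) - Real.log t) t := by
  have h1 : HasDerivAt (fun x : ℝ => x * Real.log x) (Real.log t + 1) t :=
    Real.hasDerivAt_mul_log (ne_of_gt ht.1)
  have hm : HasDerivAt (fun x : ℝ => 1 - x) (-1) t := by
    simpa using (hasDerivAt_id t).const_sub 1
  have h2 : HasDerivAt (fun x : ℝ => (1 - x) * Real.log (1 - x))
      ((Real.log (1 - t) + 1) * (-1)) t :=
    (Real.hasDerivAt_mul_log (ne_of_gt (by linarith [ht.2] : (0:ℝ) < 1 - t))).comp t hm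
  have h := h1.neg.sub h2
  have he : binEnt = fun x => -(x * Real.log x) - (1 - x) * Real.log (1 - x) := by
    funext x; simp only [binEnt]; ring
  rw [he]
  refine h.congr_deriv ?_; ring

lemma hasDerivAt_rt {β t : ℝ} (hβ : 0 < β) (ht : t ∈ Set.Ioo (0:ℝ) 1) :
    ∃ d : ℝ, HasDerivAt (fun s => rtβ s β) d t := by
  have hnum : HasDerivAt (fun s : ℝ => Real.exp (β * s) - 1) (Real.exp (β * t) * β) t := by
    have h1 : HasDerivAt (fun s : ℝ => β * s) β t := by
      simpa using (hasDerivAt_id t).const_mul β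
    simpa using h1.exp.sub_const 1
  have hden : HasDerivAt (fun s : ℝ => 1 - Real.exp (β * (s - 1)))
      (-(Real.exp (β * (t - 1)) * β)) t := by
    have h1 : HasDerivAt (fun s : ℝ => β * (s - 1)) β t := by
      simpa using ((hasDerivAt_id t).sub_const 1).const_mul β
    simpa using (h1.exp).const_sub 1
  exact ⟨_, hnum.div hden (ne_of_gt (den_pos hβ ht))⟩

lemma hasDerivAt_F {β t : ℝ} (hβ : 0 < β) (ht : t ∈ Set.Ioo (0:ℝ) 1) :
    HasDerivAt (fun s => binEnt s + Jint (rtβ s β) β - s * Real.log (rtβ s β))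
      (Real.log (1 - t) - Real.log t - Real.log (rtβ t β)) t := by
  obtain ⟨d, hd⟩ := hasDerivAt_rt hβ ht
  have hr := rt_pos hβ ht
  have hJ := (hasDerivAt_Jint hβ hr).comp t hd
  have hlog := (Real.hasDerivAt_log (ne_of_gt hr)).comp t hd
  have hmul := (hasDerivAt_id t).mul hlog
  have hB := hasDerivAt_binEnt ht
  have total := (hB.add hJ).sub hmul
  refine total.congr_deriv ?_
  have hratio := ratio_identity hβ ht
  rw [hratio]
  have hβ' : β ≠ 0 := ne_of_gt hβ
  have hr' : rtβ t β ≠ 0 := ne_of_gt hr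
  field_simp
  simp only [Function.comp, id]; ring

theorem hard_critical_maximizer (β : ℝ) (hβ : 0 < β) :
    ∃ tβ : ℝ, tβ ∈ Set.Ioo (0:ℝ) (1/2) ∧
      Real.exp (β * (1 - tβ)) = 1 + (Real.exp β - 1) * tβ ∧
      (∀ s ∈ Set.Ioo (0:ℝ) (1/2),
        Real.exp (β * (1 - s)) = 1 + (Real.exp β - 1) * s → s = tβ) ∧
      (∀ s ∈ Set.Ioo (0:ℝ) 1, s ≠ tβ →
        binEnt s + Jint (rtβ s β) β - s * Real.log (rtβ s β)
          < binEnt tβ + Jint (rtβ tβ β) β - tβ * Real.log (rtβ tβ β)) := by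
  have hE1 : 1 < Real.exp β := by
    have := Real.exp_lt_exp.mpr hβ; simpa using this
  set g := fun t : ℝ => Real.exp (β * (1 - t)) - (1 + (Real.exp β - 1) * t) with hg
  have hganti : StrictAnti g := by
    intro s u hsu
    have h1 : Real.exp (β * (1 - u)) < Real.exp (β * (1 - s)) :=
      Real.exp_lt_exp.mpr (by nlinarith)
    simp only [hg]; nlinarith
  have hgcont : Continuous g :=
    ((continuous_const.mul (continuous_const.sub continuous_id)).rexp).sub
      (continuous_const.add (continuous_const.mul continuous_id))
  have h0 : 0 < g 0 := by
    simp only [hg, mul_zero, add_zero, sub_zero, mul_one]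
    linarith
  have hhalf : g (1/2:ℝ) < 0 := by
    have hy : 1 < Real.exp (β * (1/2)) := by
      have := Real.exp_lt_exp.mpr (show (0:ℝ) < β * (1/2) by linarith); simpa using this
    have hsq : Real.exp β = Real.exp (β * (1/2)) * Real.exp (β * (1/2)) := by
      rw [← Real.exp_add]; ring_nf
    have h12 : β * (1 - 1/2 : ℝ) = β * (1/2) := by ring
    simp only [hg, h12, hsq]
    nlinarith
  obtain ⟨tβ, htmem, htβeq⟩ :=
    intermediate_value_Ioo' (by norm_num : (0:ℝ) ≤ 1/2) hgcont.continuousOn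
      (show (0:ℝ) ∈ Set.Ioo (g (1/2)) (g 0) from ⟨hhalf, h0⟩)
  have heq : Real.exp (β * (1 - tβ)) = 1 + (Real.exp β - 1) * tβ := by
    have := htβeq; simp only [hg] at this; linarith
  have ht1 : tβ ∈ Set.Ioo (0:ℝ) 1 := ⟨htmem.1, by linarith [htmem.2]⟩
  -- rtβ tβ β = (1 - tβ)/tβ
  have hc : Real.exp (β * (tβ - 1)) * Real.exp (β * (1 - tβ)) = 1 := by
    rw [← Real.exp_add, show β * (tβ - 1) + β * (1 - tβ) = 0 by ring, Real.exp_zero]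
  have ha : Real.exp (β * tβ) = Real.exp β * Real.exp (β * (tβ - 1)) := by
    rw [← Real.exp_add]; ring_nf
  have hrt : rtβ tβ β = (1 - tβ) / tβ := by
    rw [rtβ, div_eq_div_iff (ne_of_gt (den_pos hβ ht1)) (ne_of_gt ht1.1)]
    rw [heq] at hc
    rw [ha]
    linear_combination hc
  refine ⟨tβ, htmem, heq, ?_, ?_⟩
  · intro s hs hseq
    refine hganti.injective ?_
    simp only [hg]
    rw [hseq, heq]
    ring
  · intro s hs hne
    set F := fun s => binEnt s + Jint (rtβ s β) β - s * Real.log (rtβ s β) with hF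
    have hderiv : ∀ x ∈ Set.Ioo (0:ℝ) 1,
        deriv F x = Real.log (1 - x) - Real.log x - Real.log (rtβ x β) :=
      fun x hx => (hasDerivAt_F hβ hx).deriv
    have hpos : ∀ x ∈ Set.Ioo (0:ℝ) 1, x < tβ → 0 < deriv F x := by
      intro x hx hlt
      rw [hderiv x hx]
      have hrx : rtβ x β < (1 - x) / x := by
        have h1 : rtβ x β < rtβ tβ β := rt_strictMono hβ hx ht1 hlt
        have h2 : (1 - tβ) / tβ < (1 - x) / x := by
          rw [div_lt_div_iff₀ ht1.1 hx.1]; nlinarith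
        rw [hrt] at h1; linarith
      have := Real.log_lt_log (rt_pos hβ hx) hrx
      rw [Real.log_div (ne_of_gt (by linarith [hx.2])) (ne_of_gt hx.1)] at this
      linarith
    have hneg : ∀ x ∈ Set.Ioo (0:ℝ) 1, tβ < x → deriv F x < 0 := by
      intro x hx hlt
      rw [hderiv x hx]
      have hrx : (1 - x) / x < rtβ x β := by
        have h1 : rtβ tβ β < rtβ x β := rt_strictMono hβ ht1 hx hlt
        have h2 : (1 - x) / x < (1 - tβ) / tβ := by
          rw [div_lt_div_iff₀ hx.1 ht1.1]; nlinarith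
        rw [hrt] at h1; linarith
      have := Real.log_lt_log (div_pos (by linarith [hx.2]) hx.1) hrx
      rw [Real.log_div (ne_of_gt (by linarith [hx.2])) (ne_of_gt hx.1)] at this
      linarith
    have hcontF : ∀ x ∈ Set.Ioo (0:ℝ) 1, ContinuousAt F x :=
      fun x hx => (hasDerivAt_F hβ hx).continuousAt
    rcases lt_or_gt_of_ne hne with h | h
    · have hmono : StrictMonoOn F (Set.Ioc 0 tβ) := by
        apply strictMonoOn_of_deriv_pos (convex_Ioc 0 tβ)
        · exact fun x hx =>
            (hcontF x ⟨hx.1, lt_of_le_of_lt hx.2 ht1.2⟩).continuousWithinAt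
        · rw [interior_Ioc]
          exact fun x hx => hpos x ⟨hx.1, hx.2.trans ht1.2⟩ hx.2
      exact hmono ⟨hs.1, h.le⟩ ⟨ht1.1, le_rfl⟩ h
    · have hanti : StrictAntiOn F (Set.Ico tβ 1) := by
        apply strictAntiOn_of_deriv_neg (convex_Ico tβ 1)
        · exact fun x hx =>
            (hcontF x ⟨lt_of_lt_of_le ht1.1 hx.1, hx.2⟩).continuousWithinAt
        · rw [interior_Ico]
          exact fun x hx => hneg x ⟨ht1.1.trans hx.1, hx.2⟩ hx.1
      exact hanti ⟨le_rfl, ht1.2⟩ ⟨h.le, hs.2⟩ h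
end

section
/- For all real z > 1: ((z² − 1)/ln z)·ln((1+z)/2) − (3z² − 2z − 1)/4 > 0. -/
open Real Set

private lemma hasDerivAt_L (z : ℝ) (hz : 0 < z) :
    HasDerivAt (fun x : ℝ => Real.log ((1 + x) / 2)) (1 / (1 + z)) z := by
  have h1 : HasDerivAt (fun x : ℝ => (1 + x) / 2) (1 / 2) z := by
    simpa using ((hasDerivAt_id z).const_add 1).div_const 2
  have h2 := h1.log (by positivity)
  convert h2 using 1
  field_simp

private lemma hasDerivAt_g (z : ℝ) (hz : 0 < z) :
    HasDerivAt (fun x : ℝ => 4 * Real.log ((1 + x) / 2) - 3 * Real.log x + 1 - x⁻¹)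
      (4 * (1 / (1 + z)) - 3 * (1 / z) + (z ^ 2)⁻¹) z := by
  have h1 := (hasDerivAt_L z hz).const_mul 4
  have h2 := (Real.hasDerivAt_log hz.ne').const_mul 3
  have h3 := hasDerivAt_inv hz.ne'
  have := ((h1.sub h2).add_const 1).sub h3
  refine this.congr_deriv ?_
  ring

private lemma g_pos (z : ℝ) (hz : 1 < z) :
    0 < 4 * Real.log ((1 + z) / 2) - 3 * Real.log z + 1 - z⁻¹ := by
  set g : ℝ → ℝ := fun x => 4 * Real.log ((1 + x) / 2) - 3 * Real.log x + 1 - x⁻¹ with hg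
  have hmono : StrictMonoOn g (Ici 1) := by
    apply strictMonoOn_of_deriv_pos (convex_Ici 1)
    · intro x hx
      exact (hasDerivAt_g x (lt_of_lt_of_le one_pos hx)).differentiableAt.continuousAt.continuousWithinAt
    · intro x hx
      rw [interior_Ici] at hx
      have hx0 : (0 : ℝ) < x := lt_trans one_pos hx
      rw [(hasDerivAt_g x hx0).deriv]
      have : 4 * (1 / (1 + x)) - 3 * (1 / x) + (x ^ 2)⁻¹
          = (x - 1) ^ 2 / (x ^ 2 * (1 + x)) := by
        field_simp
        ring
      rw [this]
      have hx1 : (1:ℝ) < x := hx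
      have : 0 < x - 1 := by linarith
      positivity
  have h1 : g 1 = 0 := by simp [hg]
  have := hmono (self_mem_Ici) (mem_Ici.mpr hz.le) hz
  rw [h1] at this
  exact this

private lemma f_pos (z : ℝ) (hz : 1 < z) :
    0 < 4 * (z + 1) * Real.log ((1 + z) / 2) - (3 * z + 1) * Real.log z := by
  set f : ℝ → ℝ := fun x => 4 * (x + 1) * Real.log ((1 + x) / 2) - (3 * x + 1) * Real.log x
    with hf
  have hd : ∀ x : ℝ, 0 < x → HasDerivAt f
      (4 * Real.log ((1 + x) / 2) - 3 * Real.log x + 1 - x⁻¹) x := by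
    intro x hx
    have h1 : HasDerivAt (fun y : ℝ => 4 * (y + 1)) 4 x := by
      simpa using ((hasDerivAt_id x).add_const 1).const_mul 4
    have h2 := h1.mul (hasDerivAt_L x hx)
    have h3 : HasDerivAt (fun y : ℝ => 3 * y + 1) 3 x := by
      simpa using ((hasDerivAt_id x).const_mul 3).add_const 1
    have h4 := h3.mul (Real.hasDerivAt_log hx.ne')
    have := h2.sub h4
    refine this.congr_deriv ?_
    have hx1 : (1 + x) ≠ 0 := by positivity
    field_simp
    ring
  have hmono : StrictMonoOn f (Ici 1) := by
    apply strictMonoOn_of_deriv_pos (convex_Ici 1)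
    · intro x hx
      exact (hd x (lt_of_lt_of_le one_pos hx)).differentiableAt.continuousAt.continuousWithinAt
    · intro x hx
      rw [interior_Ici] at hx
      rw [(hd x (lt_trans one_pos hx)).deriv]
      exact g_pos x hx
  have h1 : f 1 = 0 := by simp [hf]
  have := hmono (self_mem_Ici) (mem_Ici.mpr hz.le) hz
  rw [h1] at this
  exact this

theorem elementary_log_inequality (z : ℝ) (hz : 1 < z) :
    ((z ^ 2 - 1) / Real.log z) * Real.log ((1 + z) / 2)
      - (3 * z ^ 2 - 2 * z - 1) / 4 > 0 := by
  have hlog : 0 < Real.log z := Real.log_pos hz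
  have hf := f_pos z hz
  rw [gt_iff_lt, sub_pos, div_mul_eq_mul_div, lt_div_iff₀ hlog]
  nlinarith [mul_pos (sub_pos.mpr hz) hf, hlog]
end

section
/- Let β > 0 and let (j_n) and (k_n) be sequences of integers with 0 ≤ j_n, k_n ≤ n for each n and |j_n − k_n| = O(√n) as n → ∞. Then lim_{n→∞} (1/n)·|ln a^n_{j_n}(β) − ln a^n_{k_n}(β)| = 0. -/
open Finset Filter

/-- `a^n_k(β)`: the degree-`k` elementary symmetric polynomial in the `n` variables
`e^{-βi/n}`, `i = 1,…,n`. -/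
noncomputable def ank (β : ℝ) (n k : ℕ) : ℝ :=
  ∑ s ∈ Finset.powersetCard k (Finset.Icc 1 n), ∏ i ∈ s, Real.exp (-β * (i : ℝ) / n)

/-- The combinatorial identity `(m+1) e_{m+1} = ∑_{|S|=m} x_S ∑_{i∉S} x_i`. -/
lemma key_identity (x : ℕ → ℝ) (U : Finset ℕ) (m : ℕ) :
    ∑ T ∈ U.powersetCard (m + 1), ((m : ℝ) + 1) * ∏ j ∈ T, x j
      = ∑ S ∈ U.powersetCard m, ∑ i ∈ U \ S, (x i * ∏ j ∈ S, x j) := by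
  have h1 : ∀ T ∈ U.powersetCard (m + 1),
      ((m : ℝ) + 1) * ∏ j ∈ T, x j = ∑ i ∈ T, (x i * ∏ j ∈ T.erase i, x j) := by
    intro T hT
    rw [Finset.mem_powersetCard] at hT
    have : ∀ i ∈ T, x i * ∏ j ∈ T.erase i, x j = ∏ j ∈ T, x j := fun i hi =>
      Finset.mul_prod_erase T x hi
    rw [Finset.sum_congr rfl this, Finset.sum_const, hT.2]
    push_cast
    ring
  rw [Finset.sum_congr rfl h1, Finset.sum_sigma', Finset.sum_sigma']
  refine Finset.sum_nbij' (fun p => ⟨p.1.erase p.2, p.2⟩) (fun p => ⟨insert p.2 p.1, p.2⟩)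
    ?_ ?_ ?_ ?_ ?_
  · rintro ⟨T, i⟩ hp
    simp only [Finset.mem_sigma, Finset.mem_powersetCard] at hp ⊢
    obtain ⟨⟨hTU, hTc⟩, hiT⟩ := hp
    refine ⟨⟨(Finset.erase_subset _ _).trans hTU, ?_⟩, ?_⟩
    · rw [Finset.card_erase_of_mem hiT, hTc]
      omega
    · simp [Finset.mem_sdiff, hTU hiT]
  · rintro ⟨S, i⟩ hp
    simp only [Finset.mem_sigma, Finset.mem_powersetCard, Finset.mem_sdiff] at hp ⊢
    obtain ⟨⟨hSU, hSc⟩, hiU, hiS⟩ := hp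
    exact ⟨⟨Finset.insert_subset hiU hSU, by rw [Finset.card_insert_of_notMem hiS, hSc]⟩,
      Finset.mem_insert_self _ _⟩
  · rintro ⟨T, i⟩ hp
    simp only [Finset.mem_sigma] at hp
    simp [Finset.insert_erase hp.2]
  · rintro ⟨S, i⟩ hp
    simp only [Finset.mem_sigma, Finset.mem_sdiff] at hp
    simp [Finset.erase_insert hp.2.2]
  · rintro ⟨T, i⟩ _
    rfl

lemma ank_pos (β : ℝ) {n k : ℕ} (hk : k ≤ n) : 0 < ank β n k := by
  refine Finset.sum_pos (fun s _ => Finset.prod_pos fun i _ => Real.exp_pos _) ?_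
  rw [Finset.powersetCard_nonempty, Nat.card_Icc]
  omega

lemma ank_ratio (β : ℝ) (hβ : 0 < β) {n m : ℕ} (hm : m < n) :
    Real.exp (-β) / n * ank β n m ≤ ank β n (m + 1) ∧
      ank β n (m + 1) ≤ n * ank β n m := by
  have hn : (0 : ℝ) < n := by exact_mod_cast Nat.pos_of_ne_zero (by omega)
  set x : ℕ → ℝ := fun i => Real.exp (-β * (i : ℝ) / n) with hxdef
  set U : Finset ℕ := Finset.Icc 1 n with hU
  have hx1 : ∀ i ∈ U, x i ≤ 1 := by
    intro i hi
    rw [show (1 : ℝ) = Real.exp 0 from Real.exp_zero.symm]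
    apply Real.exp_le_exp.2
    have hi0 : (0 : ℝ) ≤ i := Nat.cast_nonneg i
    apply div_nonpos_of_nonpos_of_nonneg _ hn.le
    nlinarith
  have hx2 : ∀ i ∈ U, Real.exp (-β) ≤ x i := by
    intro i hi
    rw [Finset.mem_Icc] at hi
    apply Real.exp_le_exp.2
    rw [le_div_iff₀ hn]
    have : (i : ℝ) ≤ n := Nat.cast_le.2 hi.2
    nlinarith
  have hcard : ∀ S ∈ U.powersetCard m, (U \ S).card = n - m := by
    intro S hS
    rw [Finset.mem_powersetCard] at hS
    rw [Finset.card_sdiff_of_subset hS.1, hS.2, hU, Nat.card_Icc]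
    omega
  have hkey : ((m : ℝ) + 1) * ank β n (m + 1)
      = ∑ S ∈ U.powersetCard m, ∑ i ∈ U \ S, (x i * ∏ j ∈ S, x j) := by
    rw [ank, Finset.mul_sum]
    exact key_identity x U m
  have hA : 0 < ank β n m := ank_pos β hm.le
  have hB : 0 < ank β n (m + 1) := ank_pos β hm
  have hAeq : ank β n m = ∑ S ∈ U.powersetCard m, ∏ j ∈ S, x j := rfl
  have hub : ((m : ℝ) + 1) * ank β n (m + 1) ≤ ((n - m : ℕ) : ℝ) * ank β n m := by
    rw [hkey, hAeq, Finset.mul_sum]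
    apply Finset.sum_le_sum
    intro S hS
    have hP : 0 < ∏ j ∈ S, x j := Finset.prod_pos fun j _ => Real.exp_pos _
    calc ∑ i ∈ U \ S, (x i * ∏ j ∈ S, x j)
        ≤ (U \ S).card • (∏ j ∈ S, x j) := by
          apply Finset.sum_le_card_nsmul
          intro i hi
          have hiU : i ∈ U := (Finset.mem_sdiff.1 hi).1
          nlinarith [hx1 i hiU]
      _ = ((n - m : ℕ) : ℝ) * ∏ j ∈ S, x j := by
          rw [hcard S hS, nsmul_eq_mul]
  have hlb : Real.exp (-β) * (((n - m : ℕ) : ℝ) * ank β n m)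
      ≤ ((m : ℝ) + 1) * ank β n (m + 1) := by
    rw [hkey, hAeq, Finset.mul_sum, Finset.mul_sum]
    apply Finset.sum_le_sum
    intro S hS
    have hP : 0 < ∏ j ∈ S, x j := Finset.prod_pos fun j _ => Real.exp_pos _
    calc Real.exp (-β) * (((n - m : ℕ) : ℝ) * ∏ j ∈ S, x j)
        = (U \ S).card • (Real.exp (-β) * ∏ j ∈ S, x j) := by
          rw [hcard S hS, nsmul_eq_mul]; ring
      _ ≤ ∑ i ∈ U \ S, (x i * ∏ j ∈ S, x j) := by
          apply Finset.card_nsmul_le_sum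
          intro i hi
          have hiU : i ∈ U := (Finset.mem_sdiff.1 hi).1
          nlinarith [hx2 i hiU]
  have hc1 : (1 : ℝ) ≤ ((n - m : ℕ) : ℝ) := by exact_mod_cast Nat.one_le_iff_ne_zero.2 (by omega)
  have hc2 : ((n - m : ℕ) : ℝ) ≤ n := by exact_mod_cast Nat.sub_le n m
  have hmn : (m : ℝ) + 1 ≤ n := by exact_mod_cast hm
  have hE : 0 < Real.exp (-β) := Real.exp_pos _
  have hm0 : (0 : ℝ) ≤ m := Nat.cast_nonneg m
  constructor
  · rw [div_mul_eq_mul_div, div_le_iff₀ hn]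
    nlinarith [hlb, mul_nonneg (mul_nonneg hE.le hA.le) (sub_nonneg.2 hc1),
      mul_nonneg hB.le (sub_nonneg.2 hmn)]
  · nlinarith [hub, mul_nonneg hA.le (sub_nonneg.2 hc2), mul_nonneg hB.le hm0]

lemma ank_step (β : ℝ) (hβ : 0 < β) {n m : ℕ} (hm : m < n) :
    |Real.log (ank β n (m + 1)) - Real.log (ank β n m)| ≤ Real.log n + β := by
  obtain ⟨h1, h2⟩ := ank_ratio β hβ hm
  have hA : 0 < ank β n m := ank_pos β hm.le
  have hB : 0 < ank β n (m + 1) := ank_pos β hm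
  have hn : (0 : ℝ) < n := by exact_mod_cast Nat.pos_of_ne_zero (by omega)
  rw [abs_le]
  constructor
  · have hlog : Real.log (Real.exp (-β) / n * ank β n m) ≤ Real.log (ank β n (m + 1)) :=
      Real.log_le_log (by positivity) h1
    rw [Real.log_mul (by positivity) hA.ne', Real.log_div (Real.exp_ne_zero _) hn.ne',
      Real.log_exp] at hlog
    linarith
  · have hlog : Real.log (ank β n (m + 1)) ≤ Real.log (n * ank β n m) :=
      Real.log_le_log hB h2
    rw [Real.log_mul hn.ne' hA.ne'] at hlog
    have : 0 ≤ Real.log n + β - Real.log n := by linarith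
    linarith

lemma ank_chain (β : ℝ) (hβ : 0 < β) (n : ℕ) :
    ∀ d a : ℕ, a + d ≤ n →
      |Real.log (ank β n (a + d)) - Real.log (ank β n a)| ≤ d * (Real.log n + β) := by
  intro d
  induction d with
  | zero => intro a _; simp
  | succ e ih =>
    intro a h
    have h1 := ih a (by omega)
    have h2 := ank_step β hβ (show a + e < n by omega)
    calc |Real.log (ank β n (a + (e + 1))) - Real.log (ank β n a)|
        ≤ |Real.log (ank β n (a + e + 1)) - Real.log (ank β n (a + e))|
            + |Real.log (ank β n (a + e)) - Real.log (ank β n a)| := by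
          rw [show a + (e + 1) = a + e + 1 by ring]
          exact abs_sub_le _ _ _
      _ ≤ (Real.log n + β) + e * (Real.log n + β) := add_le_add h2 h1
      _ = ((e : ℝ) + 1) * (Real.log n + β) := by ring
      _ = ((e + 1 : ℕ) : ℝ) * (Real.log n + β) := by push_cast; ring

lemma ank_diff (β : ℝ) (hβ : 0 < β) {n a b : ℕ} (ha : a ≤ n) (hb : b ≤ n) :
    |Real.log (ank β n a) - Real.log (ank β n b)| ≤ |(a : ℝ) - b| * (Real.log n + β) := by
  rcases le_total b a with h | h
  · have := ank_chain β hβ n (a - b) b (by omega)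
    rw [show b + (a - b) = a by omega] at this
    have habs : |(a : ℝ) - b| = ((a - b : ℕ) : ℝ) := by
      rw [Nat.cast_sub h, abs_of_nonneg]
      simp [Nat.cast_le.2 h]
    rw [habs]
    exact this
  · have := ank_chain β hβ n (b - a) a (by omega)
    rw [show a + (b - a) = b by omega] at this
    have habs : |(a : ℝ) - b| = ((b - a : ℕ) : ℝ) := by
      rw [abs_sub_comm, Nat.cast_sub h, abs_of_nonneg]
      simp [Nat.cast_le.2 h]
    rw [habs, abs_sub_comm]
    exact this

theorem ank_close_indices (β : ℝ) (hβ : 0 < β) (j k : ℕ → ℕ)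
    (hj : ∀ n, j n ≤ n) (hk : ∀ n, k n ≤ n)
    (hO : (fun n : ℕ => ((j n : ℝ) - (k n : ℝ))) =O[Filter.atTop]
      (fun n : ℕ => Real.sqrt n)) :
    Filter.Tendsto
      (fun n : ℕ => (1 / (n : ℝ)) * |Real.log (ank β n (j n)) - Real.log (ank β n (k n))|)
      Filter.atTop (nhds 0) := by
  rw [Asymptotics.isBigO_iff] at hO
  obtain ⟨C, hC⟩ := hO
  have key : Filter.Tendsto
      (fun n : ℕ => |C| * (Real.log n / Real.sqrt n + β / Real.sqrt n))
      Filter.atTop (nhds 0) := by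
    have t1 : Filter.Tendsto (fun n : ℕ => Real.log n / Real.sqrt n) Filter.atTop (nhds 0) := by
      have := (isLittleO_log_rpow_atTop (by norm_num : (0:ℝ) < 1/2)).tendsto_div_nhds_zero
      have := this.comp (tendsto_natCast_atTop_atTop (R := ℝ))
      refine this.congr fun n => ?_
      simp only [Function.comp]
      rw [Real.sqrt_eq_rpow]
    have t2 : Filter.Tendsto (fun n : ℕ => β / Real.sqrt n) Filter.atTop (nhds 0) := by
      apply Filter.Tendsto.div_atTop tendsto_const_nhds
      have h := (tendsto_rpow_atTop (by norm_num : (0:ℝ) < 1/2)).comp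
        (tendsto_natCast_atTop_atTop (R := ℝ))
      refine Filter.tendsto_atTop_mono (fun n => ?_) h
      simp only [Function.comp]
      rw [← Real.sqrt_eq_rpow]
    have := ((t1.add t2).const_mul |C|)
    simpa using this
  apply squeeze_zero'
  · filter_upwards with n
    positivity
  · filter_upwards [hC, Filter.eventually_ge_atTop 1] with n hn hn1
    have hnR : (1 : ℝ) ≤ n := by exact_mod_cast hn1
    have hnpos : (0 : ℝ) < n := by linarith
    have hs : (0 : ℝ) < Real.sqrt n := Real.sqrt_pos.2 hnpos
    have hlogn : (0 : ℝ) ≤ Real.log n + β := by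
      have := Real.log_nonneg hnR; linarith
    have hd := ank_diff β hβ (hj n) (hk n)
    have hjk : |(j n : ℝ) - k n| ≤ |C| * Real.sqrt n := by
      have : ‖(j n : ℝ) - k n‖ ≤ C * ‖Real.sqrt n‖ := hn
      rw [Real.norm_eq_abs, Real.norm_eq_abs, abs_of_nonneg (Real.sqrt_nonneg _)] at this
      calc |(j n : ℝ) - k n| ≤ C * Real.sqrt n := this
        _ ≤ |C| * Real.sqrt n := by
            apply mul_le_mul_of_nonneg_right (le_abs_self C) (Real.sqrt_nonneg _)
    calc (1 / (n : ℝ)) * |Real.log (ank β n (j n)) - Real.log (ank β n (k n))|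
        ≤ (1 / (n : ℝ)) * (|(j n : ℝ) - k n| * (Real.log n + β)) := by
          apply mul_le_mul_of_nonneg_left hd (by positivity)
      _ ≤ (1 / (n : ℝ)) * ((|C| * Real.sqrt n) * (Real.log n + β)) := by
          apply mul_le_mul_of_nonneg_left _ (by positivity)
          exact mul_le_mul_of_nonneg_right hjk hlogn
      _ = |C| * (Real.log n / Real.sqrt n + β / Real.sqrt n) := by
          rw [← add_div]
          field_simp
          linear_combination |C| * (Real.mul_self_sqrt hnpos.le)
  · exact key
end

section
/- Let β > 0 and r > 0. For each n ≥ 1, let κ_n be any maximizer over k ∈ {0,1,…,n} of k ↦ a^n_k(β)·r^k. Then lim_{n→∞} κ_n/n = (1/β)·ln((1+r)/(1+r e^{−β})). -/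
open Finset Filter Real

lemma ank_nonneg (β : ℝ) (n k : ℕ) : 0 ≤ ank β n k :=
  Finset.sum_nonneg fun s _ => Finset.prod_nonneg fun i _ => (Real.exp_pos _).le

lemma sum_ank (β : ℝ) (n : ℕ) (y : ℝ) :
    ∑ k ∈ Finset.range (n + 1), ank β n k * y ^ k
      = ∏ i ∈ Finset.Icc 1 n, (1 + y * Real.exp (-β * (i : ℝ) / n)) := by
  classical
  have h := Finset.prod_add (fun i : ℕ => y * Real.exp (-β * (i : ℝ) / n))
    (fun _ : ℕ => (1 : ℝ)) (Finset.Icc 1 n)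
  simp only [Finset.prod_const_one, mul_one] at h
  have h2 : ∏ i ∈ Finset.Icc 1 n, (1 + y * Real.exp (-β * (i : ℝ) / n))
      = ∑ t ∈ (Finset.Icc 1 n).powerset, ∏ i ∈ t, (y * Real.exp (-β * (i : ℝ) / n)) := by
    rw [← h]; exact Finset.prod_congr rfl fun i _ => by ring
  rw [h2, Finset.sum_powerset]
  have hcard : (Finset.Icc 1 n).card = n := by simp
  rw [hcard]
  refine Finset.sum_congr rfl fun k hk => ?_
  rw [ank, Finset.sum_mul]
  refine Finset.sum_congr rfl fun t ht => ?_
  have hcard' := (Finset.mem_powersetCard.mp ht).2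
  rw [Finset.prod_mul_distrib, Finset.prod_const, hcard', mul_comm]

lemma psi_low {a : ℝ} (ha : 0 < a) (s : ℝ) :
    s * (a / (1 + a)) ≤ Real.log (1 + a * Real.exp s) - Real.log (1 + a) := by
  have h1a : (0 : ℝ) < 1 + a := by linarith
  have hp0 : 0 ≤ a / (1 + a) := by positivity
  have hp1 : a / (1 + a) ≤ 1 := by rw [div_le_one h1a]; linarith
  set p := a / (1 + a) with hp
  have key : Real.exp (p * s) ≤ (1 - p) + p * Real.exp s := by
    have := convexOn_exp.2 (Set.mem_univ (0 : ℝ)) (Set.mem_univ s)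
      (by linarith : (0:ℝ) ≤ 1 - p) hp0 (by ring)
    simpa using this
  have heq : (1 - p) + p * Real.exp s = (1 + a * Real.exp s) / (1 + a) := by
    rw [hp]; field_simp; ring
  have hpos : (0 : ℝ) < 1 + a * Real.exp s := by positivity
  calc s * p = Real.log (Real.exp (p * s)) := by rw [Real.log_exp]; ring
    _ ≤ Real.log ((1 + a * Real.exp s) / (1 + a)) := by
        apply Real.log_le_log (Real.exp_pos _)
        rw [← heq]; exact key
    _ = _ := Real.log_div (ne_of_gt hpos) (ne_of_gt h1a)

lemma psi_up {a : ℝ} (ha : 0 < a) (s : ℝ) :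
    Real.log (1 + a * Real.exp s) - Real.log (1 + a)
      ≤ s * (a / (1 + a)) + s * (Real.exp s - 1) := by
  have h1a : (0 : ℝ) < 1 + a := by linarith
  have hpos : (0 : ℝ) < 1 + a * Real.exp s := by positivity
  have hp0 : 0 ≤ a / (1 + a) := by positivity
  have hp1 : a / (1 + a) ≤ 1 := by rw [div_le_one h1a]; linarith
  have h1 : Real.log (1 + a * Real.exp s) - Real.log (1 + a)
      = Real.log ((1 + a * Real.exp s) / (1 + a)) :=
    (Real.log_div (ne_of_gt hpos) (ne_of_gt h1a)).symm
  have h2 : Real.log ((1 + a * Real.exp s) / (1 + a)) ≤ (1 + a * Real.exp s) / (1 + a) - 1 :=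
    Real.log_le_sub_one_of_pos (by positivity)
  have h3 : (1 + a * Real.exp s) / (1 + a) - 1 = (a / (1 + a)) * (Real.exp s - 1) := by
    field_simp; ring
  have h4 : 0 ≤ Real.exp s - 1 - s := by
    have := Real.add_one_le_exp s; linarith
  have hkey : Real.exp s * (1 - s) ≤ 1 := by
    have h5 := Real.add_one_le_exp (-s)
    have h6 : Real.exp s * Real.exp (-s) = 1 := by
      rw [← Real.exp_add]; simp
    nlinarith [Real.exp_pos s]
  -- p * (e^s - 1) ≤ s * p + s * (e^s - 1)
  have h7 : (a / (1 + a)) * (Real.exp s - 1) ≤ s * (a / (1 + a)) + s * (Real.exp s - 1) := by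
    nlinarith [mul_le_mul_of_nonneg_right hp1 h4]
  linarith [h1 ▸ (h2.trans_eq h3)]

lemma core (β r : ℝ) (hr : 0 < r) (n : ℕ) (hn : 1 ≤ n) (K : ℕ) (hK : K ≤ n)
    (hmax : ∀ k ≤ n, ank β n k * r ^ k ≤ ank β n K * r ^ K) (s : ℝ) :
    (K : ℝ) * s ≤ Real.log ((n : ℝ) + 1) +
      ∑ i ∈ Finset.Icc 1 n,
        (Real.log (1 + (r * Real.exp (-β * (i : ℝ) / n)) * Real.exp s)
          - Real.log (1 + r * Real.exp (-β * (i : ℝ) / n))) := by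
  have hqpos : ∀ i : ℕ, (0:ℝ) < 1 + r * Real.exp (-β * (i : ℝ) / n) := fun i => by positivity
  have hqxpos : ∀ i : ℕ, (0:ℝ) < 1 + (r * Real.exp (-β * (i : ℝ) / n)) * Real.exp s :=
    fun i => by positivity
  set P1 : ℝ := ∏ i ∈ Finset.Icc 1 n, (1 + r * Real.exp (-β * (i : ℝ) / n)) with hP1
  set Px : ℝ := ∏ i ∈ Finset.Icc 1 n, (1 + (r * Real.exp (-β * (i : ℝ) / n)) * Real.exp s)
    with hPx
  have hP1pos : 0 < P1 := Finset.prod_pos fun i _ => hqpos i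
  have hPxpos : 0 < Px := Finset.prod_pos fun i _ => hqxpos i
  have hsum1 : ∑ k ∈ Finset.range (n + 1), ank β n k * r ^ k = P1 := sum_ank β n r
  have hsumx : ∑ k ∈ Finset.range (n + 1), ank β n k * (r * Real.exp s) ^ k = Px := by
    rw [sum_ank]; exact Finset.prod_congr rfl fun i _ => by ring
  have hA : P1 ≤ ((n : ℝ) + 1) * (ank β n K * r ^ K) := by
    rw [← hsum1]
    calc ∑ k ∈ Finset.range (n + 1), ank β n k * r ^ k
        ≤ ∑ _k ∈ Finset.range (n + 1), ank β n K * r ^ K :=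
          Finset.sum_le_sum fun k hk => hmax k (Nat.lt_succ_iff.mp (Finset.mem_range.mp hk))
      _ = ((n : ℝ) + 1) * (ank β n K * r ^ K) := by
          rw [Finset.sum_const, Finset.card_range, nsmul_eq_mul]; push_cast; ring
  have hB : (ank β n K * r ^ K) * Real.exp (s * K) ≤ Px := by
    rw [← hsumx]
    have h1 : ank β n K * (r * Real.exp s) ^ K = (ank β n K * r ^ K) * Real.exp (s * K) := by
      rw [mul_pow, ← Real.exp_nat_mul]; ring_nf
    calc (ank β n K * r ^ K) * Real.exp (s * K) = ank β n K * (r * Real.exp s) ^ K := h1.symm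
      _ ≤ ∑ k ∈ Finset.range (n + 1), ank β n k * (r * Real.exp s) ^ k :=
          Finset.single_le_sum (f := fun k => ank β n k * (r * Real.exp s) ^ k)
            (fun k _ => mul_nonneg (ank_nonneg β n k) (by positivity))
            (Finset.mem_range.mpr (Nat.lt_succ_of_le hK))
  have hmain : P1 * Real.exp (s * K) ≤ ((n : ℝ) + 1) * Px := by
    calc P1 * Real.exp (s * K) ≤ (((n : ℝ) + 1) * (ank β n K * r ^ K)) * Real.exp (s * K) :=
          mul_le_mul_of_nonneg_right hA (Real.exp_pos _).le
      _ = ((n : ℝ) + 1) * ((ank β n K * r ^ K) * Real.exp (s * K)) := by ring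
      _ ≤ ((n : ℝ) + 1) * Px := mul_le_mul_of_nonneg_left hB (by positivity)
  have hlog := Real.log_le_log (by positivity) hmain
  rw [Real.log_mul (ne_of_gt hP1pos) (ne_of_gt (Real.exp_pos _)), Real.log_exp,
    Real.log_mul (by positivity) (ne_of_gt hPxpos)] at hlog
  have hlog1 : Real.log P1 = ∑ i ∈ Finset.Icc 1 n,
      Real.log (1 + r * Real.exp (-β * (i : ℝ) / n)) :=
    Real.log_prod fun i _ => ne_of_gt (hqpos i)
  have hlogx : Real.log Px = ∑ i ∈ Finset.Icc 1 n,
      Real.log (1 + (r * Real.exp (-β * (i : ℝ) / n)) * Real.exp s) :=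
    Real.log_prod fun i _ => ne_of_gt (hqxpos i)
  rw [Finset.sum_sub_distrib, ← hlog1, ← hlogx]
  linarith

lemma telescope (β r : ℝ) (hr : 0 < r) (n : ℕ) (hn : 1 ≤ n) :
    ∑ i ∈ Finset.Icc 1 n,
      (Real.log (1 + (r * Real.exp (-β * (i : ℝ) / n)) * Real.exp (β / n))
        - Real.log (1 + r * Real.exp (-β * (i : ℝ) / n)))
      = Real.log (1 + r) - Real.log (1 + r * Real.exp (-β)) := by
  have hn0 : (n : ℝ) ≠ 0 := Nat.cast_ne_zero.mpr (by omega)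
  set F : ℕ → ℝ := fun j => Real.log (1 + r * Real.exp (-β * (j : ℝ) / n)) with hF
  have hterm : ∀ j : ℕ,
      Real.log (1 + (r * Real.exp (-β * ((j+1 : ℕ) : ℝ) / n)) * Real.exp (β / n)) = F j := by
    intro j
    have : (r * Real.exp (-β * ((j+1 : ℕ) : ℝ) / n)) * Real.exp (β / n)
        = r * Real.exp (-β * (j : ℝ) / n) := by
      rw [mul_assoc, ← Real.exp_add]
      congr 2
      push_cast
      ring
    rw [this]
  have hre : ∑ i ∈ Finset.Icc 1 n,
      (Real.log (1 + (r * Real.exp (-β * (i : ℝ) / n)) * Real.exp (β / n))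
        - Real.log (1 + r * Real.exp (-β * (i : ℝ) / n)))
      = ∑ j ∈ Finset.range n, (F j - F (j + 1)) := by
    rw [← Finset.Ico_add_one_right_eq_Icc, Finset.sum_Ico_eq_sum_range]
    have hnn : n + 1 - 1 = n := by omega
    rw [hnn]
    refine Finset.sum_congr rfl fun j _ => ?_
    have h1 : 1 + j = j + 1 := by omega
    rw [h1, hterm j]
  rw [hre, Finset.sum_range_sub' F n]
  have hF0 : F 0 = Real.log (1 + r) := by
    simp [hF]
  have hFn : F n = Real.log (1 + r * Real.exp (-β)) := by
    have h2 : -β * (n : ℝ) / n = -β := by field_simp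
    simp only [hF, h2]
  rw [hF0, hFn]

theorem mode_limit (β : ℝ) (hβ : 0 < β) (r : ℝ) (hr : 0 < r) (κ : ℕ → ℕ)
    (hκ : ∀ n : ℕ, 1 ≤ n → κ n ≤ n ∧
      ∀ k ≤ n, ank β n k * r ^ k ≤ ank β n (κ n) * r ^ (κ n)) :
    Filter.Tendsto (fun n : ℕ => (κ n : ℝ) / n) Filter.atTop
      (nhds ((1 / β) * Real.log ((1 + r) / (1 + r * Real.exp (-β))))) := by
  set L : ℝ := (1 / β) * Real.log ((1 + r) / (1 + r * Real.exp (-β))) with hLdef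
  have hβL : β * L = Real.log (1 + r) - Real.log (1 + r * Real.exp (-β)) := by
    rw [hLdef]
    have h1 : (0:ℝ) < 1 + r := by linarith
    have h2 : (0:ℝ) < 1 + r * Real.exp (-β) := by positivity
    rw [Real.log_div (ne_of_gt h1) (ne_of_gt h2)]
    field_simp
  rw [Metric.tendsto_atTop]
  intro ε hε
  set s₁ : ℝ := Real.log (1 + ε / 4) with hs₁def
  have hs₁ : 0 < s₁ := Real.log_pos (by linarith)
  have hexps₁ : Real.exp s₁ = 1 + ε / 4 := Real.exp_log (by linarith)
  set s₂ : ℝ := -(ε / 4) with hs₂def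
  have hs₂ : s₂ < 0 := by rw [hs₂def]; linarith
  -- eventual facts
  have E1 : ∀ c : ℝ, 0 < c → ∀ᶠ m : ℕ in atTop, Real.log ((m : ℝ) + 1) ≤ c * m := by
    intro c hc
    have t1 : Tendsto (fun x : ℝ => Real.log x / x) atTop (nhds 0) :=
      Real.isLittleO_log_id_atTop.tendsto_div_nhds_zero
    have tg : Tendsto (fun m : ℕ => (m : ℝ) + 1) atTop atTop :=
      tendsto_atTop_add_const_right _ 1 tendsto_natCast_atTop_atTop
    have t2 := (t1.comp tg).eventually_lt_const (show (0:ℝ) < c / 2 by linarith)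
    filter_upwards [t2, eventually_ge_atTop 1] with m hm hm1
    have hm0 : (1 : ℝ) ≤ (m : ℝ) := by exact_mod_cast hm1
    have hm1' : (0 : ℝ) < (m : ℝ) + 1 := by linarith
    simp only [Function.comp] at hm
    rw [div_lt_iff₀ hm1'] at hm
    nlinarith [mul_nonneg (le_of_lt hc) (by linarith : (0:ℝ) ≤ (m:ℝ) - 1)]
  have E2 : ∀ᶠ m : ℕ in atTop, Real.exp (β / m) - 1 ≤ ε / 4 := by
    have t : Tendsto (fun m : ℕ => β / m) atTop (nhds 0) :=
      tendsto_const_div_atTop_nhds_zero_nat β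
    have t2 : Tendsto (fun m : ℕ => Real.exp (β / m)) atTop (nhds 1) := by
      have := (Real.continuous_exp.tendsto 0).comp t
      simpa [Function.comp_def] using this
    have t3 := t2.eventually_lt_const (show (1:ℝ) < 1 + ε / 4 by linarith)
    filter_upwards [t3] with m hm
    linarith
  have EV : ∀ᶠ m : ℕ in atTop, dist ((κ m : ℝ) / m) L < ε := by
    filter_upwards [E1 (s₁ * (ε / 4)) (by positivity), E1 ((ε / 4) * (ε / 4)) (by positivity),
      E2, eventually_ge_atTop 1] with n H1 H3 H2 hn
    have hn0 : (0 : ℝ) < (n : ℝ) := by exact_mod_cast Nat.lt_of_lt_of_le Nat.zero_lt_one hn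
    obtain ⟨hKn, hmax⟩ := hκ n hn
    set K := κ n with hKdef
    have hqpos : ∀ i : ℕ, (0:ℝ) < r * Real.exp (-β * (i : ℝ) / n) := fun i => by positivity
    set Sp : ℝ := ∑ i ∈ Finset.Icc 1 n,
      (r * Real.exp (-β * (i : ℝ) / n)) / (1 + r * Real.exp (-β * (i : ℝ) / n)) with hSp
    have hcard : (Finset.Icc 1 n).card = n := by simp
    -- Sp bounds via telescope
    have htel := telescope β r hr n hn
    have hlow : (β / n) * Sp ≤ β * L := by
      rw [hβL, ← htel, hSp, Finset.mul_sum]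
      exact Finset.sum_le_sum fun i _ => psi_low (hqpos i) (β / n)
    have hhigh : β * L ≤ (β / n) * Sp + (n : ℝ) * ((β / n) * (Real.exp (β / n) - 1)) := by
      rw [hβL, ← htel]
      calc ∑ i ∈ Finset.Icc 1 n,
            (Real.log (1 + (r * Real.exp (-β * (i : ℝ) / n)) * Real.exp (β / n))
              - Real.log (1 + r * Real.exp (-β * (i : ℝ) / n)))
          ≤ ∑ i ∈ Finset.Icc 1 n,
            ((β / n) * ((r * Real.exp (-β * (i : ℝ) / n)) / (1 + r * Real.exp (-β * (i : ℝ) / n)))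
              + (β / n) * (Real.exp (β / n) - 1)) :=
            Finset.sum_le_sum fun i _ => psi_up (hqpos i) (β / n)
        _ = (β / n) * Sp + (n : ℝ) * ((β / n) * (Real.exp (β / n) - 1)) := by
            rw [Finset.sum_add_distrib, Finset.sum_const, hcard, hSp, ← Finset.mul_sum,
              nsmul_eq_mul]
    have hSple : Sp ≤ (n : ℝ) * L := by
      have h := hlow
      rw [div_mul_eq_mul_div, div_le_iff₀ hn0] at h
      have h2 : β * Sp ≤ β * ((n:ℝ) * L) := by linarith
      exact le_of_mul_le_mul_left h2 hβ
    have hSpge : (n : ℝ) * L - (n : ℝ) * (ε / 4) ≤ Sp := by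
      have h := hhigh
      have h2 : (n : ℝ) * ((β / n) * (Real.exp (β / n) - 1)) ≤ β * (ε / 4) := by
        have hb : Real.exp (β / n) - 1 ≤ ε / 4 := H2
        have heq : (n : ℝ) * ((β / n) * (Real.exp (β / n) - 1)) = β * (Real.exp (β / n) - 1) := by
          field_simp
        rw [heq]
        exact mul_le_mul_of_nonneg_left hb (le_of_lt hβ)
      have h3 : β * L ≤ (β / n) * Sp + β * (ε / 4) := by linarith
      rw [div_mul_eq_mul_div] at h3
      have h4 : β * L - β * (ε/4) ≤ (β * Sp) / n := by linarith
      rw [le_div_iff₀ hn0] at h4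
      have h5 : β * (((n:ℝ) * L - (n:ℝ) * (ε/4))) ≤ β * Sp := by linarith
      exact le_of_mul_le_mul_left h5 hβ
    -- upper bound on K
    have hup : (K : ℝ) / n - L ≤ ε / 2 := by
      have hcore := core β r hr n hn K hKn hmax s₁
      have hsum : ∑ i ∈ Finset.Icc 1 n,
          (Real.log (1 + (r * Real.exp (-β * (i : ℝ) / n)) * Real.exp s₁)
            - Real.log (1 + r * Real.exp (-β * (i : ℝ) / n)))
          ≤ s₁ * Sp + (n : ℝ) * (s₁ * (Real.exp s₁ - 1)) := by
        calc _ ≤ ∑ i ∈ Finset.Icc 1 n,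
              (s₁ * ((r * Real.exp (-β * (i : ℝ) / n)) / (1 + r * Real.exp (-β * (i : ℝ) / n)))
                + s₁ * (Real.exp s₁ - 1)) :=
              Finset.sum_le_sum fun i _ => psi_up (hqpos i) s₁
          _ = s₁ * Sp + (n : ℝ) * (s₁ * (Real.exp s₁ - 1)) := by
              rw [Finset.sum_add_distrib, Finset.sum_const, hcard, hSp, ← Finset.mul_sum,
                nsmul_eq_mul]
      have h5 : (K : ℝ) * s₁ ≤ Real.log ((n:ℝ) + 1) + s₁ * Sp + (n:ℝ) * (s₁ * (Real.exp s₁ - 1)) := by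
        linarith
      have h6 : (K : ℝ) * s₁ ≤ s₁ * (ε/4) * n + s₁ * ((n:ℝ) * L) + (n:ℝ) * (s₁ * (ε/4)) := by
        have h7 : s₁ * Sp ≤ s₁ * ((n:ℝ) * L) := mul_le_mul_of_nonneg_left hSple (le_of_lt hs₁)
        rw [hexps₁] at h5
        have h8 : (n:ℝ) * (s₁ * (1 + ε/4 - 1)) = (n:ℝ) * (s₁ * (ε/4)) := by ring
        linarith
      have h9 : (K : ℝ) ≤ (n:ℝ) * L + (n:ℝ) * (ε/2) := by
        have h10 : (K : ℝ) * s₁ ≤ ((n:ℝ) * L + (n:ℝ) * (ε/2)) * s₁ := by linarith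
        exact le_of_mul_le_mul_right h10 hs₁
      have h11 : (K:ℝ)/n ≤ L + ε/2 := by
        rw [div_le_iff₀ hn0]
        linarith
      linarith
    -- lower bound on K
    have hdown : L - (K : ℝ) / n ≤ 3 * (ε / 4) := by
      have hcore := core β r hr n hn K hKn hmax s₂
      have hsum : ∑ i ∈ Finset.Icc 1 n,
          (Real.log (1 + (r * Real.exp (-β * (i : ℝ) / n)) * Real.exp s₂)
            - Real.log (1 + r * Real.exp (-β * (i : ℝ) / n)))
          ≤ s₂ * Sp + (n : ℝ) * (s₂ * (Real.exp s₂ - 1)) := by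
        calc _ ≤ ∑ i ∈ Finset.Icc 1 n,
              (s₂ * ((r * Real.exp (-β * (i : ℝ) / n)) / (1 + r * Real.exp (-β * (i : ℝ) / n)))
                + s₂ * (Real.exp s₂ - 1)) :=
              Finset.sum_le_sum fun i _ => psi_up (hqpos i) s₂
          _ = s₂ * Sp + (n : ℝ) * (s₂ * (Real.exp s₂ - 1)) := by
              rw [Finset.sum_add_distrib, Finset.sum_const, hcard, hSp, ← Finset.mul_sum,
                nsmul_eq_mul]
      have hB1 : s₂ * Sp ≤ s₂ * ((n:ℝ) * L - (n:ℝ) * (ε/4)) :=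
        mul_le_mul_of_nonpos_left hSpge (le_of_lt hs₂)
      have hB2 : s₂ * (Real.exp s₂ - 1) ≤ (ε/4) * (ε/4) := by
        have hexp : s₂ ≤ Real.exp s₂ - 1 := by linarith [Real.add_one_le_exp s₂]
        have h1 : s₂ * (Real.exp s₂ - 1) ≤ s₂ * s₂ := mul_le_mul_of_nonpos_left hexp (le_of_lt hs₂)
        have h2 : s₂ * s₂ = (ε/4) * (ε/4) := by rw [hs₂def]; ring
        exact h1.trans (le_of_eq h2)
      have hB2' : (n:ℝ) * (s₂ * (Real.exp s₂ - 1)) ≤ (n:ℝ) * ((ε/4) * (ε/4)) :=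
        mul_le_mul_of_nonneg_left hB2 (le_of_lt hn0)
      have h5 : (K:ℝ) * s₂ ≤ ((ε/4)*(ε/4)) * n + s₂ * ((n:ℝ)*L - (n:ℝ)*(ε/4))
          + (n:ℝ) * ((ε/4)*(ε/4)) := by
        have := H3
        linarith
      -- s₂ = -(ε/4)
      have h6 : (ε/4) * ((n:ℝ)*L - 3 * ((n:ℝ) * (ε/4))) ≤ (ε/4) * (K:ℝ) := by
        rw [hs₂def] at h5
        linarith
      have h7 : (n:ℝ)*L - 3 * ((n:ℝ) * (ε/4)) ≤ (K:ℝ) :=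
        le_of_mul_le_mul_left h6 (by linarith : (0:ℝ) < ε/4)
      have h8 : L - 3*(ε/4) ≤ (K:ℝ)/n := by
        rw [le_div_iff₀ hn0]
        linarith
      linarith
    rw [Real.dist_eq, abs_sub_lt_iff]
    constructor
    · linarith
    · linarith
  exact eventually_atTop.mp EV
end
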